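/- arXiv:0910.4927 — 3 statements merged into one kernel-verified Lean document; each statement's English description precedes it below -/
import Mathlib

section
/- Let σ be the first exit time of a simple symmetric random walk on ℤ started at 1 from the interval [1, 2ℓ−1], where 2ℓ is an integer greater than 1. Then for 0 ≤ λ < λ_crit(ℓ) := −ln(cos(π/(2ℓ))), the moment generating function satisfies E[e^{λσ}] = cos(c_λ(ℓ−1))/cos(c_λ ℓ), where c_λ = arccos(e^{−λ}). -/
open MeasureTheory ProbabilityTheory
open scoped ENNReal

namespace Stmt7Aux

def posw (x : ℤ) (y : ℕ → ℤ) (k : ℕ) : ℤ := x + ∑ i ∈ Finset.range k, y i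

noncomputable def Ew (ℓ : ℕ) (lam : ℝ) : ℕ → ℤ → (ℕ → ℤ) → ℝ
  | 0, x, _ => if x ∈ Set.Icc (1:ℤ) (2*ℓ-1) then 0 else 1
  | n+1, x, y => if x ∈ Set.Icc (1:ℤ) (2*ℓ-1) then
      Real.exp lam * Ew ℓ lam n (x + y 0) (fun i => y (i+1)) else 1

noncomputable def uw (ℓ : ℕ) (lam : ℝ) : ℕ → ℤ → ℝ
  | 0, x => if x ∈ Set.Icc (1:ℤ) (2*ℓ-1) then 0 else 1
  | n+1, x => if x ∈ Set.Icc (1:ℤ) (2*ℓ-1) then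
      Real.exp lam * (uw ℓ lam n (x-1) + uw ℓ lam n (x+1))/2 else 1

lemma posw_succ (x : ℤ) (y : ℕ → ℤ) (k : ℕ) :
    posw x y (k+1) = posw (x + y 0) (fun i => y (i+1)) k := by
  simp only [posw, Finset.sum_range_succ']
  ring

lemma Ew_dep (ℓ : ℕ) (lam : ℝ) : ∀ (n : ℕ) (x : ℤ) (y y' : ℕ → ℤ),
    (∀ i < n, y i = y' i) → Ew ℓ lam n x y = Ew ℓ lam n x y' := by
  intro n
  induction n with
  | zero => intro x y y' _; rfl
  | succ n ih =>
    intro x y y' h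
    simp only [Ew]
    rw [h 0 (Nat.succ_pos n), ih (x + y' 0) _ _ (fun i hi => h (i+1) (by omega))]

lemma Ew_nonneg (ℓ : ℕ) (lam : ℝ) : ∀ (n : ℕ) (x : ℤ) (y : ℕ → ℤ), 0 ≤ Ew ℓ lam n x y := by
  intro n
  induction n with
  | zero => intro x y; simp only [Ew]; split <;> norm_num
  | succ n ih =>
    intro x y; simp only [Ew]; split
    · have := ih (x + y 0) (fun i => y (i+1))
      positivity
    · norm_num

lemma Ew_mono (ℓ : ℕ) (lam : ℝ) : ∀ (n : ℕ) (x : ℤ) (y : ℕ → ℤ),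
    Ew ℓ lam n x y ≤ Ew ℓ lam (n+1) x y := by
  intro n
  induction n with
  | zero =>
    intro x y
    by_cases hx : x ∈ Set.Icc (1:ℤ) (2*ℓ-1)
    · conv_lhs => rw [Ew]
      conv_rhs => rw [Ew]
      rw [if_pos hx, if_pos hx]
      have := Ew_nonneg ℓ lam 0 (x + y 0) (fun i => y (i+1))
      positivity
    · conv_lhs => rw [Ew]
      conv_rhs => rw [Ew]
      rw [if_neg hx, if_neg hx]
  | succ n ih =>
    intro x y
    by_cases hx : x ∈ Set.Icc (1:ℤ) (2*ℓ-1)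
    · conv_lhs => rw [Ew]
      conv_rhs => rw [Ew]
      rw [if_pos hx, if_pos hx]
      have := ih (x + y 0) (fun i => y (i+1))
      have h2 := Real.exp_pos lam
      nlinarith
    · conv_lhs => rw [Ew]
      conv_rhs => rw [Ew]
      rw [if_neg hx, if_neg hx]

lemma Ew_le_exp (ℓ : ℕ) (lam : ℝ) (h0 : 0 ≤ lam) : ∀ (n : ℕ) (x : ℤ) (y : ℕ → ℤ),
    Ew ℓ lam n x y ≤ Real.exp (lam * n) := by
  intro n
  induction n with
  | zero => intro x y; simp only [Ew]; split <;> simp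
  | succ n ih =>
    intro x y
    have hone : (1:ℝ) ≤ Real.exp (lam * (n+1)) := by
      rw [← Real.exp_zero]
      exact Real.exp_le_exp.2 (by positivity)
    simp only [Ew]
    split
    · have h1 := ih (x + y 0) (fun i => y (i+1))
      have h2 : Real.exp lam * Real.exp (lam * n) = Real.exp (lam * (n+1)) := by
        rw [← Real.exp_add]; ring_nf
      push_cast
      nlinarith [Real.exp_pos lam, Ew_nonneg ℓ lam n (x + y 0) (fun i => y (i+1))]
    · push_cast; exact hone

lemma Ew_bridge (ℓ : ℕ) (lam : ℝ) : ∀ (n : ℕ) (x : ℤ) (y : ℕ → ℤ),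
    Ew ℓ lam n x y = if (∃ k ≤ n, posw x y k ∉ Set.Icc (1:ℤ) (2*ℓ-1)) then
      Real.exp (lam * (sInf {k : ℕ | posw x y k ∉ Set.Icc (1:ℤ) (2*ℓ-1)} : ℕ)) else 0 := by
  intro n
  induction n with
  | zero =>
    intro x y
    have hp0 : posw x y 0 = x := by simp [posw]
    by_cases hx : x ∈ Set.Icc (1:ℤ) (2*ℓ-1)
    · have hne : ¬ ∃ k ≤ 0, posw x y k ∉ Set.Icc (1:ℤ) (2*ℓ-1) := by
        rintro ⟨k, hk, h⟩
        interval_cases k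
        rw [hp0] at h
        exact h hx
      simp only [Ew]
      rw [if_pos hx, if_neg hne]
    · have hex : ∃ k ≤ 0, posw x y k ∉ Set.Icc (1:ℤ) (2*ℓ-1) :=
        ⟨0, le_refl 0, by rwa [hp0]⟩
      have hinf : sInf {k : ℕ | posw x y k ∉ Set.Icc (1:ℤ) (2*ℓ-1)} = 0 :=
        Nat.sInf_eq_zero.2 (Or.inl (by rw [Set.mem_setOf_eq, hp0]; exact hx))
      simp only [Ew]
      rw [if_neg hx, if_pos hex, hinf]
      simp
  | succ n ih =>
    intro x y
    have hp0 : posw x y 0 = x := by simp [posw]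
    by_cases hx : x ∈ Set.Icc (1:ℤ) (2*ℓ-1)
    · have hiff : (∃ k ≤ n + 1, posw x y k ∉ Set.Icc (1:ℤ) (2*ℓ-1)) ↔
          (∃ k ≤ n, posw (x + y 0) (fun i => y (i+1)) k ∉ Set.Icc (1:ℤ) (2*ℓ-1)) := by
        constructor
        · rintro ⟨k, hk, h⟩
          match k with
          | 0 =>
            rw [hp0] at h
            exact absurd hx h
          | k+1 => exact ⟨k, by omega, by rwa [posw_succ] at h⟩
        · rintro ⟨k, hk, h⟩
          exact ⟨k+1, by omega, by rwa [posw_succ]⟩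
      simp only [Ew]
      rw [if_pos hx, ih (x + y 0) (fun i => y (i+1))]
      by_cases hex : ∃ k ≤ n, posw (x + y 0) (fun i => y (i+1)) k ∉ Set.Icc (1:ℤ) (2*ℓ-1)
      · have hex2 := hiff.2 hex
        have hne : {k : ℕ | posw (x + y 0) (fun i => y (i+1)) k ∉ Set.Icc (1:ℤ) (2*ℓ-1)}.Nonempty := by
          obtain ⟨k, _, h⟩ := hex; exact ⟨k, h⟩
        have hmem : posw (x + y 0) (fun i => y (i+1))
            (sInf {k : ℕ | posw (x + y 0) (fun i => y (i+1)) k ∉ Set.Icc (1:ℤ) (2*ℓ-1)})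
            ∉ Set.Icc (1:ℤ) (2*ℓ-1) := Nat.sInf_mem hne
        have hinf : sInf {k : ℕ | posw x y k ∉ Set.Icc (1:ℤ) (2*ℓ-1)} =
            sInf {k : ℕ | posw (x + y 0) (fun i => y (i+1)) k ∉ Set.Icc (1:ℤ) (2*ℓ-1)} + 1 := by
          apply le_antisymm
          · exact Nat.sInf_le (by rw [Set.mem_setOf_eq, posw_succ]; exact hmem)
          · have hne2 : {k : ℕ | posw x y k ∉ Set.Icc (1:ℤ) (2*ℓ-1)}.Nonempty := by
              obtain ⟨k, _, h⟩ := hex2; exact ⟨k, h⟩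
            have hmem2 := Nat.sInf_mem hne2
            have hpos : sInf {k : ℕ | posw x y k ∉ Set.Icc (1:ℤ) (2*ℓ-1)} ≠ 0 := by
              intro h
              rw [h, Set.mem_setOf_eq, hp0] at hmem2
              exact hmem2 hx
            obtain ⟨j', hj'⟩ := Nat.exists_eq_succ_of_ne_zero hpos
            rw [hj', Set.mem_setOf_eq, posw_succ] at hmem2
            have := Nat.sInf_le (show j' ∈ {k : ℕ | posw (x + y 0) (fun i => y (i+1)) k ∉ Set.Icc (1:ℤ) (2*ℓ-1)} from hmem2)
            omega
        rw [if_pos hex, if_pos hex2, hinf, ← Real.exp_add]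
        congr 1
        push_cast
        ring
      · rw [if_neg hex, if_neg (fun h => hex (hiff.1 h))]
        ring
    · have hex : ∃ k ≤ n+1, posw x y k ∉ Set.Icc (1:ℤ) (2*ℓ-1) := ⟨0, by omega, by rwa [hp0]⟩
      have hinf : sInf {k : ℕ | posw x y k ∉ Set.Icc (1:ℤ) (2*ℓ-1)} = 0 :=
        Nat.sInf_eq_zero.2 (Or.inl (by rw [Set.mem_setOf_eq, hp0]; exact hx))
      simp only [Ew]
      rw [if_neg hx, if_pos hex, hinf]
      simp
def extb (n : ℕ) (b : Fin n → Bool) : ℕ → ℤ :=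
  fun i => if h : i < n then (if b ⟨i, h⟩ then 1 else -1) else 1

lemma comb (ℓ : ℕ) (lam : ℝ) : ∀ (n : ℕ) (x : ℤ),
    ∑ b : Fin n → Bool, Ew ℓ lam n x (extb n b) = 2^n * uw ℓ lam n x := by
  intro n
  induction n with
  | zero =>
    intro x
    simp [Ew, uw]
  | succ n ih =>
    intro x
    rw [← Equiv.sum_comp (Fin.consEquiv fun _ => Bool)
      (fun g => Ew ℓ lam (n+1) x (extb (n+1) g)), Fintype.sum_prod_type]
    by_cases hx : x ∈ Set.Icc (1:ℤ) (2*ℓ-1)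
    · have hterm : ∀ (b0 : Bool) (b : Fin n → Bool),
          Ew ℓ lam (n+1) x (extb (n+1) (Fin.cons b0 b)) =
            Real.exp lam * Ew ℓ lam n (x + (if b0 then 1 else -1)) (extb n b) := by
        intro b0 b
        conv_lhs => rw [Ew]
        rw [if_pos hx]
        have h1 : extb (n+1) (Fin.cons b0 b) 0 = if b0 then 1 else -1 := by
          simp [extb]
        rw [h1]
        congr 1
        refine Ew_dep ℓ lam n _ _ _ (fun i hi => ?_)
        simp only [extb, dif_pos (by omega : i + 1 < n + 1), dif_pos hi]
        have : (⟨i+1, by omega⟩ : Fin (n+1)) = (⟨i, hi⟩ : Fin n).succ := rfl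
        rw [this, Fin.cons_succ]
      have hthis : ∀ p : Bool × (Fin n → Bool),
          Ew ℓ lam (n+1) x (extb (n+1) ((Fin.consEquiv fun _ => Bool) p)) =
          Real.exp lam * Ew ℓ lam n (x + (if p.1 then 1 else -1)) (extb n p.2) := by
        rintro ⟨b0, b⟩
        exact hterm b0 b
      simp only [hthis]
      have hsum : ∀ s : ℤ, ∑ b : Fin n → Bool,
          Real.exp lam * Ew ℓ lam n (x + s) (extb n b)
            = Real.exp lam * (2^n * uw ℓ lam n (x+s)) := fun s => by
        rw [← Finset.mul_sum, ih]
      rw [Fintype.sum_bool]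
      simp only [show ((true:Bool) = true) = True by simp, show ((false:Bool) = true) = False by simp,
        if_true, if_false]
      rw [hsum 1, hsum (-1), show x + (-1:ℤ) = x - 1 by ring]
      have hu : uw ℓ lam (n+1) x = Real.exp lam * (uw ℓ lam n (x-1) + uw ℓ lam n (x+1))/2 := by
        simp only [uw, if_pos hx]
      rw [hu]
      ring
    · have hterm : ∀ p : Bool × (Fin n → Bool),
          Ew ℓ lam (n+1) x (extb (n+1) ((Fin.consEquiv fun _ => Bool) p)) = 1 := by
        intro p
        conv_lhs => rw [Ew]
        rw [if_neg hx]
      have hu : uw ℓ lam (n+1) x = 1 := by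
        simp only [uw, if_neg hx]
      simp only [hterm, hu, Finset.sum_const, Finset.card_univ, smul_eq_mul, mul_one]
      simp [Fintype.card_fun]
      ring
lemma meas_comp_int {α : Type*} [MeasurableSpace α] {f : α → ℤ} (hf : Measurable f)
    {F : ℤ → α → ℝ} (hF : ∀ z, Measurable (F z)) : Measurable (fun ω => F (f ω) ω) := by
  intro s hs
  have h : (fun ω => F (f ω) ω) ⁻¹' s = ⋃ z : ℤ, (f ⁻¹' {z} ∩ (F z) ⁻¹' s) := by
    ext ω
    simp only [Set.mem_preimage, Set.mem_iUnion, Set.mem_inter_iff, Set.mem_singleton_iff]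
    constructor
    · intro h; exact ⟨f ω, rfl, h⟩
    · rintro ⟨z, hz, h⟩; rwa [← hz] at h
  rw [h]
  exact MeasurableSet.iUnion fun z => (hf (measurableSet_singleton z)).inter (hF z hs)

lemma expand {Ω : Type*} [MeasurableSpace Ω] (μ : Measure Ω) [IsProbabilityMeasure μ]
    (Y : ℕ → Ω → ℤ) (hmeas : ∀ i, Measurable (Y i))
    (hindep : iIndepFun Y μ)
    (hup : ∀ i, μ {ω | Y i ω = 1} = 1/2) (hdown : ∀ i, μ {ω | Y i ω = -1} = 1/2)
    (n : ℕ) (F : (ℕ → ℤ) → ℝ)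
    (hF : ∀ y y', (∀ i < n, y i = y' i) → F y = F y') :
    ∫ ω, F (fun i => Y i ω) ∂μ = (2^n : ℝ)⁻¹ * ∑ b : Fin n → Bool, F (extb n b) := by
  classical
  set A : (Fin n → Bool) → Set Ω :=
    fun b => ⋂ i : Fin n, Y i ⁻¹' {(if b i then 1 else -1 : ℤ)} with hA
  have hAmeas : ∀ b, MeasurableSet (A b) :=
    fun b => MeasurableSet.iInter (fun i => hmeas i (measurableSet_singleton _))
  have hAmu : ∀ b, μ (A b) = (2:ℝ≥0∞)⁻¹ ^ n := by
    intro b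
    have hrw : A b = ⋂ i ∈ Finset.range n, Y i ⁻¹' {extb n b i} := by
      ext ω
      simp only [hA, Set.mem_iInter, Set.mem_preimage, Set.mem_singleton_iff,
        Finset.mem_range]
      constructor
      · intro h i hi
        rw [show extb n b i = if b ⟨i, hi⟩ then 1 else -1 by simp [extb, hi]]
        exact h ⟨i, hi⟩
      · intro h i
        have := h i.1 i.2
        rwa [show extb n b i.1 = if b i then 1 else -1 by simp [extb, i.2]] at this
    rw [hrw, hindep.meas_biInter (fun i _ => ⟨{extb n b i}, trivial, rfl⟩)]
    have : ∀ i ∈ Finset.range n, μ (Y i ⁻¹' {extb n b i}) = (2:ℝ≥0∞)⁻¹ := by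
      intro i hi
      rw [Finset.mem_range] at hi
      rw [show extb n b i = if b ⟨i, hi⟩ then 1 else -1 by simp [extb, hi]]
      by_cases hb : b ⟨i, hi⟩
      · rw [if_pos hb]
        have := hup i
        rw [show (Y i ⁻¹' {(1:ℤ)}) = {ω | Y i ω = 1} from rfl, this]
        rw [one_div]
      · rw [if_neg hb]
        have := hdown i
        rw [show (Y i ⁻¹' {(-1:ℤ)}) = {ω | Y i ω = -1} from rfl, this]
        rw [one_div]
    rw [Finset.prod_congr rfl this, Finset.prod_const, Finset.card_range]
  -- good set
  set Gd : Set Ω := ⋂ i ∈ Finset.range n, {ω | Y i ω = 1 ∨ Y i ω = -1} with hGd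
  have hnull : μ Gdᶜ = 0 := by
    have hGdc : Gdᶜ = ⋃ i ∈ Finset.range n, {ω | Y i ω = 1 ∨ Y i ω = -1}ᶜ := by
      simp [hGd, Set.compl_iInter]
    rw [hGdc]
    refine measure_biUnion_null_iff (Finset.countable_toSet _) |>.2 (fun i _ => ?_)
    have hu : {ω | Y i ω = 1 ∨ Y i ω = -1} = {ω | Y i ω = 1} ∪ {ω | Y i ω = -1} := rfl
    have hm1 : MeasurableSet {ω | Y i ω = 1} := hmeas i (measurableSet_singleton 1)
    have hm2 : MeasurableSet {ω | Y i ω = -1} := hmeas i (measurableSet_singleton (-1))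
    have hdisj : Disjoint {ω | Y i ω = 1} {ω | Y i ω = -1} := by
      rw [Set.disjoint_left]
      intro ω h1 h2
      simp only [Set.mem_setOf_eq] at h1 h2
      omega
    have hone : μ ({ω | Y i ω = 1} ∪ {ω | Y i ω = -1}) = 1 := by
      rw [measure_union hdisj hm2, hup i, hdown i, one_div]
      exact ENNReal.inv_two_add_inv_two
    have := (prob_compl_eq_zero_iff (hm1.union hm2)).2 hone
    rw [hu]
    exact this
  -- pointwise identity on Gd
  have hpt : ∀ ω ∈ Gd, F (fun i => Y i ω) =
      ∑ b : Fin n → Bool, Set.indicator (A b) (fun _ => F (extb n b)) ω := by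
    intro ω hω
    have hGdω : ∀ i < n, Y i ω = 1 ∨ Y i ω = -1 := by
      intro i hi
      have := Set.mem_iInter₂.1 hω i (Finset.mem_range.2 hi)
      exact this
    set b₀ : Fin n → Bool := fun i => decide (Y i ω = 1) with hb₀
    have hmem : ω ∈ A b₀ := by
      rw [hA]
      refine Set.mem_iInter.2 fun i => ?_
      simp only [Set.mem_preimage, Set.mem_singleton_iff, hb₀]
      rcases hGdω i.1 i.2 with h | h
      · simp [h]
      · have : ¬ (Y i ω = 1) := by omega
        simp [this, h]
    have hnot : ∀ b, b ≠ b₀ → ω ∉ A b := by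
      intro b hb hmem'
      apply hb
      funext i
      have hYi := Set.mem_iInter.1 hmem' i
      simp only [Set.mem_preimage, Set.mem_singleton_iff] at hYi
      by_cases hbi : b i = true
      · rw [if_pos hbi] at hYi
        simp [hb₀, hbi, hYi]
      · rw [if_neg hbi] at hYi
        have hne : ¬ (Y i.1 ω = 1) := by omega
        simp [hb₀, hne, Bool.not_eq_true _ ▸ hbi]
    rw [Finset.sum_eq_single b₀]
    · rw [Set.indicator_of_mem hmem]
      refine hF _ _ (fun i hi => ?_) |>.symm
      rw [show extb n b₀ i = if b₀ ⟨i, hi⟩ then 1 else -1 by simp [extb, hi]]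
      have := Set.mem_iInter.1 hmem ⟨i, hi⟩
      simp only [Set.mem_preimage, Set.mem_singleton_iff] at this
      exact this.symm
    · intro b _ hb
      rw [Set.indicator_of_notMem (hnot b hb)]
    · intro h
      exact absurd (Finset.mem_univ b₀) h
  have hGdmeas : MeasurableSet Gd := by
    refine Finset.measurableSet_biInter _ (fun i _ => ?_)
    exact (hmeas i (measurableSet_singleton 1)).union (hmeas i (measurableSet_singleton (-1)))
  have hae : (fun ω => F (fun i => Y i ω)) =ᵐ[μ]
      (fun ω => ∑ b : Fin n → Bool, Set.indicator (A b) (fun _ => F (extb n b)) ω) := by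
    refine ae_iff.2 (measure_mono_null (fun ω hω => ?_) hnull)
    simp only [Set.mem_setOf_eq] at hω
    simp only [Set.mem_compl_iff]
    intro hmem
    exact hω (hpt ω hmem)
  rw [integral_congr_ae hae,
    integral_finset_sum _ (fun b _ => (integrable_const _).indicator (hAmeas b))]
  have : ∀ b : Fin n → Bool,
      ∫ ω, Set.indicator (A b) (fun _ => F (extb n b)) ω ∂μ = (2^n : ℝ)⁻¹ * F (extb n b) := by
    intro b
    rw [integral_indicator_const _ (hAmeas b), measureReal_def, hAmu b]
    rw [smul_eq_mul]
    congr 1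
    rw [ENNReal.toReal_pow, ENNReal.toReal_inv, inv_pow]
    norm_num
  rw [Finset.sum_congr rfl (fun b _ => this b), ← Finset.mul_sum]
lemma Ew_meas {Ω : Type*} [MeasurableSpace Ω] (Y : ℕ → Ω → ℤ) (hmeas : ∀ i, Measurable (Y i))
    (ℓ : ℕ) (lam : ℝ) : ∀ (n : ℕ) (x : ℤ) (m : ℕ),
    Measurable (fun ω => Ew ℓ lam n x (fun i => Y (i + m) ω)) := by
  intro n
  induction n with
  | zero => intro x m; simp only [Ew]; exact measurable_const
  | succ n ih =>
    intro x m
    by_cases hx : x ∈ Set.Icc (1:ℤ) (2*ℓ-1)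
    · simp only [Ew, if_pos hx]
      simp only [show ∀ i : ℕ, i + 1 + m = i + (m + 1) from fun i => by omega, show (0:ℕ) + m = m from by omega]
      exact ((meas_comp_int (hmeas m) (fun z => ih (x + z) (m+1))).const_mul _)
    · simp only [Ew, if_neg hx]
      exact measurable_const
lemma sin_ge {a t : ℝ} (ha : 0 ≤ a) (h1 : a ≤ t) (h2 : t ≤ Real.pi - a) :
    Real.sin a ≤ Real.sin t := by
  have hpi := Real.pi_pos
  rcases le_total t (Real.pi/2) with h | h
  · exact Real.strictMonoOn_sin.monotoneOn
      ⟨by linarith, by linarith⟩ ⟨by linarith, h⟩ h1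
  · have : Real.sin t = Real.sin (Real.pi - t) := (Real.sin_pi_sub t).symm
    rw [this]
    exact Real.strictMonoOn_sin.monotoneOn
      ⟨by linarith, by linarith⟩ ⟨by linarith, by linarith⟩ (by linarith)

lemma decay (ℓ : ℕ) (hℓ : 2 ≤ ℓ) (K C : ℝ) (hK : 0 ≤ K) (w : ℕ → ℤ → ℝ)
    (h00 : ∀ x : ℤ, x ∈ Set.Icc (0:ℤ) (2*ℓ) →
      w 0 x ≤ C * Real.sin (Real.pi/(2*ℓ) * x))
    (hreci : ∀ n, ∀ x : ℤ, x ∈ Set.Icc (1:ℤ) (2*ℓ-1) →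
      w (n+1) x ≤ K * (w n (x-1) + w n (x+1))/2)
    (hrecb : ∀ n, ∀ x : ℤ, x ∈ Set.Icc (0:ℤ) (2*ℓ) → x ∉ Set.Icc (1:ℤ) (2*ℓ-1) →
      w (n+1) x ≤ 0) :
    ∀ n, ∀ x : ℤ, x ∈ Set.Icc (0:ℤ) (2*ℓ) →
      w n x ≤ C * (K * Real.cos (Real.pi/(2*ℓ)))^n * Real.sin (Real.pi/(2*ℓ) * x) := by
  have hpi := Real.pi_pos
  set a := Real.pi/(2*ℓ) with hadef
  have hl0 : (0:ℝ) < (ℓ:ℝ) := by exact_mod_cast (by omega : 0 < ℓ)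
  have ha0 : 0 < a := by
    apply div_pos hpi
    positivity
  have hapi : a * (2*(ℓ:ℝ)) = Real.pi := by
    rw [hadef]; field_simp
  intro n
  induction n with
  | zero =>
    intro x hx
    simpa using h00 x hx
  | succ n ih =>
    intro x hx
    by_cases hxi : x ∈ Set.Icc (1:ℤ) (2*ℓ-1)
    · have hx1 : (x - 1) ∈ Set.Icc (0:ℤ) (2*ℓ) := by
        simp only [Set.mem_Icc] at hxi ⊢; omega
      have hx2 : (x + 1) ∈ Set.Icc (0:ℤ) (2*ℓ) := by
        simp only [Set.mem_Icc] at hxi ⊢; omega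
      have ih1 := ih (x-1) hx1
      have ih2 := ih (x+1) hx2
      have step := hreci n x hxi
      have htrig : Real.sin (a * ((x:ℝ) - 1)) + Real.sin (a * ((x:ℝ) + 1))
          = 2 * Real.sin (a * x) * Real.cos a := by
        rw [show a * ((x:ℝ) - 1) = a * x - a by ring, show a * ((x:ℝ) + 1) = a * x + a by ring,
          Real.sin_sub, Real.sin_add]
        ring
      have hcast1 : ((x - 1 : ℤ) : ℝ) = (x:ℝ) - 1 := by push_cast; ring
      have hcast2 : ((x + 1 : ℤ) : ℝ) = (x:ℝ) + 1 := by push_cast; ring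
      rw [hcast1] at ih1
      rw [hcast2] at ih2
      calc w (n+1) x ≤ K * (w n (x-1) + w n (x+1))/2 := step
        _ ≤ K * (C * (K * Real.cos a)^n * Real.sin (a * ((x:ℝ) - 1))
              + C * (K * Real.cos a)^n * Real.sin (a * ((x:ℝ) + 1)))/2 := by
            have := add_le_add ih1 ih2
            nlinarith
        _ = C * (K * Real.cos a)^(n+1) * Real.sin (a * x) := by
            rw [show C * (K * Real.cos a)^n * Real.sin (a * ((x:ℝ) - 1))
              + C * (K * Real.cos a)^n * Real.sin (a * ((x:ℝ) + 1))
              = C * (K * Real.cos a)^n * (Real.sin (a * ((x:ℝ)-1)) + Real.sin (a * ((x:ℝ)+1))) by ring,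
              htrig, pow_succ]
            ring
    · -- boundary : x = 0 or x = 2ℓ, sin vanishes
      have hx0 : x = 0 ∨ x = 2*ℓ := by
        simp only [Set.mem_Icc] at hx hxi; omega
      have hsin : Real.sin (a * x) = 0 := by
        rcases hx0 with h | h
        · rw [h]; push_cast; simp
        · rw [h]
          rw [show a * ((2*ℓ:ℤ):ℝ) = a * (2*(ℓ:ℝ)) by push_cast; ring, hapi]
          exact Real.sin_pi
      rw [hsin, mul_zero]
      exact hrecb n x hx hxi

lemma intE {Ω : Type*} [MeasurableSpace Ω] (μ : Measure Ω) [IsProbabilityMeasure μ]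
    (Y : ℕ → Ω → ℤ) (hmeas : ∀ i, Measurable (Y i))
    (hindep : iIndepFun Y μ)
    (hup : ∀ i, μ {ω | Y i ω = 1} = 1/2) (hdown : ∀ i, μ {ω | Y i ω = -1} = 1/2)
    (ℓ : ℕ) (lam : ℝ) (n : ℕ) (x : ℤ) :
    ∫ ω, Ew ℓ lam n x (fun i => Y i ω) ∂μ = uw ℓ lam n x := by
  rw [expand μ Y hmeas hindep hup hdown n (fun y => Ew ℓ lam n x y)
      (fun y y' h => Ew_dep ℓ lam n x y y' h), comb ℓ lam n x, ← mul_assoc,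
    inv_mul_cancel₀ (by positivity), one_mul]

end Stmt7Aux
open MeasureTheory ProbabilityTheory
open scoped ENNReal

open Stmt7Aux in
set_option maxHeartbeats 2000000 in
/-- Let `σ` be the first exit time from `[1, 2ℓ-1]` of a simple symmetric random walk
`X_k = 1 + Y_1 + ⋯ + Y_k` started at `1`, built from i.i.d. fair `±1` steps `Y_i`.
Then for `0 ≤ λ < λ_crit(ℓ) = -ln cos(π/(2ℓ))`,
`E[e^{λσ}] = cos(c_λ(ℓ-1)) / cos(c_λ ℓ)` where `c_λ = arccos(e^{-λ})`. -/
theorem stmt7 {Ω : Type*} [MeasurableSpace Ω] (μ : Measure Ω) [IsProbabilityMeasure μ]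
    (Y : ℕ → Ω → ℤ) (hmeas : ∀ i, Measurable (Y i))
    (hindep : iIndepFun Y μ)
    (hup : ∀ i, μ {ω | Y i ω = 1} = 1/2) (hdown : ∀ i, μ {ω | Y i ω = -1} = 1/2)
    (ℓ : ℕ) (hℓ : 1 ≤ ℓ) (lam : ℝ) (h0 : 0 ≤ lam)
    (hcrit : lam < -Real.log (Real.cos (Real.pi / (2 * ℓ)))) :
    ∫ ω, Real.exp (lam *
        (sInf {k : ℕ | (1 + ∑ i ∈ Finset.range k, Y i ω) ∉
          Set.Icc (1 : ℤ) (2 * ℓ - 1)} : ℕ)) ∂μ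
      = Real.cos (Real.arccos (Real.exp (-lam)) * ((ℓ : ℝ) - 1)) /
          Real.cos (Real.arccos (Real.exp (-lam)) * ℓ) := by
  classical
  have hpi := Real.pi_pos
  have hl2 : 2 ≤ ℓ := by
    by_contra hcon
    have hone : ℓ = 1 := by omega
    subst hone
    norm_num at hcrit
    first
    | linarith
    | (rw [Real.cos_pi_div_two, Real.log_zero, neg_zero] at hcrit; linarith)
  have hl0 : (0:ℝ) < (ℓ:ℝ) := by exact_mod_cast (by omega : 0 < ℓ)
  have hl1 : (2:ℝ) ≤ (ℓ:ℝ) := by exact_mod_cast hl2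
  set a := Real.pi/(2*(ℓ:ℝ)) with hadef
  have ha0 : 0 < a := div_pos hpi (by positivity)
  have hal : a * (ℓ:ℝ) = Real.pi/2 := by
    rw [hadef]; field_simp
  have hal2 : a * (2*(ℓ:ℝ)) = Real.pi := by
    rw [hadef]; field_simp
  have ha2 : a < Real.pi/2 := by nlinarith
  have hcosa_pos : 0 < Real.cos a := Real.cos_pos_of_mem_Ioo ⟨by linarith, ha2⟩
  have hcosa_lt : Real.cos a < 1 := by
    have h := Real.strictAntiOn_cos ⟨le_refl (0:ℝ), hpi.le⟩ ⟨ha0.le, by linarith⟩ ha0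
    rwa [Real.cos_zero] at h
  have hEgt : Real.cos a < Real.exp (-lam) := by
    have h1 : Real.log (Real.cos a) < -lam := by linarith
    calc Real.cos a = Real.exp (Real.log (Real.cos a)) := (Real.exp_log hcosa_pos).symm
      _ < Real.exp (-lam) := Real.exp_lt_exp.2 h1
  have hEle1 : Real.exp (-lam) ≤ 1 := by
    rw [← Real.exp_zero]; exact Real.exp_le_exp.2 (by linarith)
  have hEneg1 : (-1:ℝ) ≤ Real.exp (-lam) := by linarith [Real.exp_pos (-lam)]
  set c := Real.arccos (Real.exp (-lam)) with hcdef
  have hc0 : 0 ≤ c := Real.arccos_nonneg _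
  have hcpi : c ≤ Real.pi := Real.arccos_le_pi _
  have hcc : Real.cos c = Real.exp (-lam) := Real.cos_arccos hEneg1 hEle1
  have hca : c < a := by
    by_contra hcon
    push_neg at hcon
    have := Real.cos_le_cos_of_nonneg_of_le_pi ha0.le hcpi hcon
    rw [hcc] at this; linarith
  have hclpi2 : c * (ℓ:ℝ) < Real.pi/2 := by
    rw [← hal]; exact mul_lt_mul_of_pos_right hca hl0
  have hclnn : 0 ≤ c * (ℓ:ℝ) := by positivity
  have hD : 0 < Real.cos (c * (ℓ:ℝ)) := Real.cos_pos_of_mem_Ioo ⟨by linarith, hclpi2⟩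
  set hfun : ℤ → ℝ := fun x => Real.cos (c * ((x:ℝ) - (ℓ:ℝ))) / Real.cos (c * (ℓ:ℝ))
    with hfdef
  have hexp1 : Real.exp lam * Real.cos c = 1 := by
    rw [hcc, ← Real.exp_add]; simp
  have hrech : ∀ x : ℤ, Real.exp lam * (hfun (x-1) + hfun (x+1))/2 = hfun x := by
    intro x
    simp only [hfdef]
    have e1 : Real.cos (c * (((x:ℝ) - 1) - ℓ)) + Real.cos (c * (((x:ℝ) + 1) - ℓ))
        = 2 * Real.cos c * Real.cos (c * ((x:ℝ) - ℓ)) := by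
      rw [show c * ((x:ℝ) - 1 - ℓ) = c * ((x:ℝ) - ℓ) - c by ring,
          show c * ((x:ℝ) + 1 - ℓ) = c * ((x:ℝ) - ℓ) + c by ring,
          Real.cos_sub, Real.cos_add]
      ring
    push_cast
    rw [← add_div, e1,
      show Real.exp lam * (2 * Real.cos c * Real.cos (c * ((x:ℝ) - ℓ)) / Real.cos (c * (ℓ:ℝ)))/2
        = (Real.exp lam * Real.cos c) * (Real.cos (c * ((x:ℝ) - ℓ)) / Real.cos (c * (ℓ:ℝ))) by ring,
      hexp1, one_mul]
  have habs : ∀ x : ℤ, x ∈ Set.Icc (0:ℤ) (2*ℓ) →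
      Real.cos (c * (ℓ:ℝ)) ≤ Real.cos (c * ((x:ℝ) - ℓ)) := by
    intro x hx
    simp only [Set.mem_Icc] at hx
    have hx0 : (0:ℝ) ≤ (x:ℝ) := by exact_mod_cast hx.1
    have hx2 : (x:ℝ) ≤ 2*(ℓ:ℝ) := by exact_mod_cast hx.2
    have habs1 : |(x:ℝ) - ℓ| ≤ (ℓ:ℝ) := abs_le.2 ⟨by linarith, by linarith⟩
    have h2 : |c * ((x:ℝ) - ℓ)| ≤ c * ℓ := by
      rw [abs_mul, abs_of_nonneg hc0]
      exact mul_le_mul_of_nonneg_left habs1 hc0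
    calc Real.cos (c * (ℓ:ℝ)) ≤ Real.cos |c * ((x:ℝ) - ℓ)| :=
          Real.cos_le_cos_of_nonneg_of_le_pi (abs_nonneg _) (by linarith) h2
      _ = Real.cos (c * ((x:ℝ) - ℓ)) := Real.cos_abs _
  have hge1 : ∀ x : ℤ, x ∈ Set.Icc (0:ℤ) (2*ℓ) → 1 ≤ hfun x := by
    intro x hx
    simp only [hfdef]
    exact (one_le_div hD).2 (habs x hx)
  have hleD : ∀ x : ℤ, hfun x ≤ 1 / Real.cos (c * (ℓ:ℝ)) := by
    intro x
    simp only [hfdef]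
    exact (div_le_div_iff_of_pos_right hD).2 (Real.cos_le_one _)
  have hIcc : ∀ x : ℤ, x ∈ Set.Icc (0:ℤ) (2*ℓ) → x ∉ Set.Icc (1:ℤ) (2*ℓ-1) →
      x = 0 ∨ x = 2*ℓ := by
    intro x hx hxi
    simp only [Set.mem_Icc, not_and_or, not_le] at hx hxi
    omega
  have hfb : ∀ x : ℤ, x = 0 ∨ x = 2*(ℓ:ℤ) → hfun x = 1 := by
    intro x hx
    simp only [hfdef]
    rcases hx with h | h
    · rw [h, show c * (((0:ℤ):ℝ) - ℓ) = -(c * (ℓ:ℝ)) by push_cast; ring, Real.cos_neg,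
        div_self hD.ne']
    · rw [h, show c * (((2*ℓ:ℤ):ℝ) - ℓ) = c * (ℓ:ℝ) by push_cast; ring, div_self hD.ne']
  have huwb : ∀ (lam' : ℝ) (n : ℕ) (x : ℤ), x ∉ Set.Icc (1:ℤ) (2*ℓ-1) →
      uw ℓ lam' n x = 1 := by
    intro lam' n x hx
    cases n with
    | zero => simp only [uw, if_neg hx]
    | succ n => simp only [uw, if_neg hx]
  have huw_le_h : ∀ n, ∀ x : ℤ, x ∈ Set.Icc (0:ℤ) (2*ℓ) → uw ℓ lam n x ≤ hfun x := by
    intro n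
    induction n with
    | zero =>
      intro x hx
      simp only [uw]
      split
      · linarith [hge1 x hx]
      · exact hge1 x hx
    | succ n ih =>
      intro x hx
      by_cases hxi : x ∈ Set.Icc (1:ℤ) (2*ℓ-1)
      · have hm1 : (x-1) ∈ Set.Icc (0:ℤ) (2*ℓ) := by
          simp only [Set.mem_Icc] at hxi ⊢; omega
        have hm2 : (x+1) ∈ Set.Icc (0:ℤ) (2*ℓ) := by
          simp only [Set.mem_Icc] at hxi ⊢; omega
        have h1 := ih (x-1) hm1
        have h2 := ih (x+1) hm2
        simp only [uw, if_pos hxi]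
        rw [← hrech x]
        have hep := Real.exp_pos lam
        nlinarith
      · rw [huwb lam (n+1) x hxi]
        exact hge1 x hx
  -- trig helpers
  have hsa : 0 < Real.sin a := Real.sin_pos_of_pos_of_lt_pi ha0 (by linarith)
  have hsinx : ∀ x : ℤ, 1 ≤ x → x ≤ 2*(ℓ:ℤ)-1 → Real.sin a ≤ Real.sin (a * (x:ℝ)) := by
    intro x h1 h2
    have hx1 : (1:ℝ) ≤ (x:ℝ) := by exact_mod_cast h1
    have hx2 : (x:ℝ) ≤ 2*(ℓ:ℝ)-1 := by
      have : ((x:ℝ)) ≤ ((2*(ℓ:ℤ)-1 : ℤ) : ℝ) := by exact_mod_cast h2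
      push_cast at this
      linarith
    refine sin_ge ha0.le (by nlinarith) (by nlinarith)
  have hsax_nonneg : ∀ x : ℤ, x ∈ Set.Icc (0:ℤ) (2*ℓ) → 0 ≤ Real.sin (a * (x:ℝ)) := by
    intro x hx
    simp only [Set.mem_Icc] at hx
    have hx0 : (0:ℝ) ≤ (x:ℝ) := by exact_mod_cast hx.1
    have hx2 : (x:ℝ) ≤ 2*(ℓ:ℝ) := by exact_mod_cast hx.2
    refine Real.sin_nonneg_of_nonneg_of_le_pi (by positivity) (by nlinarith)
  -- first application of decay : convergence of uw to hfun
  set C1 : ℝ := 1/(Real.cos (c * (ℓ:ℝ)) * Real.sin a) with hC1def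
  have hC1pos : 0 < C1 := by rw [hC1def]; positivity
  have hdec1 := decay ℓ hl2 (Real.exp lam) C1 (Real.exp_pos lam).le
      (fun n x => hfun x - uw ℓ lam n x) ?_ ?_ ?_
  rotate_left
  · -- initial bound
    intro x hx
    rw [← hadef]
    show hfun x - uw ℓ lam 0 x ≤ C1 * Real.sin (a * (x:ℝ))
    by_cases hxi : x ∈ Set.Icc (1:ℤ) (2*ℓ-1)
    · simp only [uw, if_pos hxi, sub_zero]
      have h1 : Real.sin a ≤ Real.sin (a * (x:ℝ)) := by
        simp only [Set.mem_Icc] at hxi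
        exact hsinx x hxi.1 hxi.2
      have h2 := hleD x
      calc hfun x ≤ 1 / Real.cos (c * (ℓ:ℝ)) := h2
        _ = C1 * Real.sin a := by rw [hC1def]; field_simp
        _ ≤ C1 * Real.sin (a * (x:ℝ)) := by nlinarith
    · rw [huwb lam 0 x hxi, hfb x (by exact_mod_cast hIcc x hx hxi), sub_self]
      have := hsax_nonneg x hx
      positivity
  · -- interior recursion
    intro n x hxi
    rw [show uw ℓ lam (n+1) x = Real.exp lam * (uw ℓ lam n (x-1) + uw ℓ lam n (x+1))/2 from
      by simp only [uw, if_pos hxi], ← hrech x]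
    apply le_of_eq
    ring
  · -- boundary
    intro n x hx hxi
    rw [huwb lam (n+1) x hxi, hfb x (hIcc x hx hxi), sub_self]
  rw [← hadef] at hdec1
  have hmem1 : (1:ℤ) ∈ Set.Icc (0:ℤ) (2*(ℓ:ℤ)) := by
    simp only [Set.mem_Icc]
    omega
  have hup1 : ∀ n, hfun 1 - uw ℓ lam n 1 ≤ C1 * (Real.exp lam * Real.cos a)^n * Real.sin a := by
    intro n
    have h := hdec1 n 1 hmem1
    simpa using h
  have hr1nn : (0:ℝ) ≤ Real.exp lam * Real.cos a := by positivity
  have hr1lt : Real.exp lam * Real.cos a < 1 := by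
    have h := mul_lt_mul_of_pos_left hEgt (Real.exp_pos lam)
    rwa [← Real.exp_add, add_neg_cancel, Real.exp_zero] at h
  have hpow1 : Filter.Tendsto (fun n : ℕ => (Real.exp lam * Real.cos a)^n)
      Filter.atTop (nhds 0) := tendsto_pow_atTop_nhds_zero_of_lt_one hr1nn hr1lt
  have hlow : Filter.Tendsto (fun n : ℕ => hfun 1 - C1 * (Real.exp lam * Real.cos a)^n * Real.sin a)
      Filter.atTop (nhds (hfun 1)) := by
    have h2 : Filter.Tendsto (fun n : ℕ => C1 * (Real.exp lam * Real.cos a)^n * Real.sin a)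
        Filter.atTop (nhds 0) := by
      have h3 := (hpow1.const_mul C1).mul_const (Real.sin a)
      simpa using h3
    have h4 := Filter.Tendsto.sub (tendsto_const_nhds (x := hfun 1) (f := Filter.atTop)) h2
    simpa using h4
  have huwlim : Filter.Tendsto (fun n => uw ℓ lam n 1) Filter.atTop (nhds (hfun 1)) := by
    refine tendsto_of_tendsto_of_tendsto_of_le_of_le hlow tendsto_const_nhds
      (fun n => by have := hup1 n; linarith) (fun n => huw_le_h n 1 hmem1)
  -- second application of decay : exit happens a.s.
  have hdec2 := decay ℓ hl2 1 (1/Real.sin a) zero_le_one (fun n x => 1 - uw ℓ 0 n x) ?_ ?_ ?_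
  rotate_left
  · intro x hx
    rw [← hadef]
    show 1 - uw ℓ 0 0 x ≤ 1/Real.sin a * Real.sin (a * (x:ℝ))
    by_cases hxi : x ∈ Set.Icc (1:ℤ) (2*ℓ-1)
    · simp only [uw, if_pos hxi, sub_zero]
      have h1 : Real.sin a ≤ Real.sin (a * (x:ℝ)) := by
        simp only [Set.mem_Icc] at hxi
        exact hsinx x hxi.1 hxi.2
      calc (1:ℝ) = Real.sin a / Real.sin a := (div_self hsa.ne').symm
        _ ≤ Real.sin (a*(x:ℝ)) / Real.sin a := (div_le_div_iff_of_pos_right hsa).2 h1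
        _ = 1/Real.sin a * Real.sin (a*(x:ℝ)) := by ring
    · rw [huwb 0 0 x hxi, sub_self]
      have := hsax_nonneg x hx
      positivity
  · intro n x hxi
    rw [show uw ℓ 0 (n+1) x = Real.exp 0 * (uw ℓ 0 n (x-1) + uw ℓ 0 n (x+1))/2 from
      by simp only [uw, if_pos hxi], Real.exp_zero]
    apply le_of_eq
    ring
  · intro n x hx hxi
    rw [huwb 0 (n+1) x hxi, sub_self]
  rw [← hadef] at hdec2
  have hq : ∀ n, 1 - uw ℓ 0 n 1 ≤ (Real.cos a)^n := by
    intro n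
    have h := hdec2 n 1 hmem1
    simp only [one_mul, Int.cast_one, mul_one] at h
    calc 1 - uw ℓ 0 n 1 ≤ 1/Real.sin a * (Real.cos a)^n * Real.sin a := h
      _ = (Real.cos a)^n := by field_simp
  -- measurability of positions, staying events
  have hposmeas : ∀ k : ℕ, Measurable (fun ω => posw 1 (fun i => Y i ω) k) := by
    intro k
    show Measurable fun ω => (1:ℤ) + ∑ i ∈ Finset.range k, Y i ω
    exact measurable_const.add (Finset.measurable_sum _ (fun i _ => hmeas i))
  set SB : ℕ → Set Ω := fun n =>
    {ω | ∀ k ≤ n, posw 1 (fun i => Y i ω) k ∈ Set.Icc (1:ℤ) (2*(ℓ:ℤ)-1)} with hSBdef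
  have hSBmeas : ∀ n, MeasurableSet (SB n) := by
    intro n
    have heq : SB n = ⋂ k ∈ Finset.range (n+1),
        (fun ω => posw 1 (fun i => Y i ω) k) ⁻¹' (Set.Icc (1:ℤ) (2*(ℓ:ℤ)-1)) := by
      ext ω
      simp only [hSBdef, Set.mem_setOf_eq, Set.mem_iInter, Set.mem_preimage, Finset.mem_range,
        Nat.lt_succ_iff]
    rw [heq]
    exact Finset.measurableSet_biInter _ (fun k _ => hposmeas k MeasurableSet.of_discrete)
  have hindE0 : ∀ (n : ℕ) (ω : Ω), Ew ℓ 0 n 1 (fun i => Y i ω)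
      = Set.indicator ((SB n)ᶜ) (fun _ => (1:ℝ)) ω := by
    intro n ω
    rw [Ew_bridge]
    by_cases hex : ∃ k ≤ n, posw 1 (fun i => Y i ω) k ∉ Set.Icc (1:ℤ) (2*(ℓ:ℤ)-1)
    · rw [if_pos hex, Set.indicator_of_mem]
      · simp
      · simp only [hSBdef, Set.mem_compl_iff, Set.mem_setOf_eq]
        push_neg
        exact hex
    · rw [if_neg hex, Set.indicator_of_notMem]
      rw [Set.notMem_compl_iff]
      push_neg at hex
      exact hex
  have hmuSBc : ∀ n, (μ ((SB n)ᶜ)).toReal = uw ℓ 0 n 1 := by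
    intro n
    have h1 := intE μ Y hmeas hindep hup hdown ℓ 0 n 1
    rw [show (fun ω => Ew ℓ 0 n 1 fun i => Y i ω)
        = fun ω => Set.indicator ((SB n)ᶜ) (fun _ => (1:ℝ)) ω from funext (hindE0 n)] at h1
    rw [integral_indicator_const (1:ℝ) (hSBmeas n).compl] at h1
    rw [measureReal_def] at h1
    simpa using h1
  have hmuSB : ∀ n, μ (SB n) ≤ ENNReal.ofReal ((Real.cos a)^n) := by
    intro n
    rw [ENNReal.le_ofReal_iff_toReal_le (measure_ne_top μ _) (by positivity)]
    have hsum := prob_add_prob_compl (μ := μ) (hSBmeas n)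
    have h2 : (μ (SB n)).toReal + (μ ((SB n)ᶜ)).toReal = 1 := by
      rw [← ENNReal.toReal_add (measure_ne_top μ _) (measure_ne_top μ _), hsum, ENNReal.toReal_one]
    rw [hmuSBc n] at h2
    linarith [hq n]
  have hnullne : ∀ᵐ ω ∂μ,
      ({k : ℕ | posw 1 (fun i => Y i ω) k ∉ Set.Icc (1:ℤ) (2*(ℓ:ℤ)-1)}).Nonempty := by
    rw [ae_iff]
    have hsub : ∀ n, {ω | ¬ ({k : ℕ | posw 1 (fun i => Y i ω) k ∉
        Set.Icc (1:ℤ) (2*(ℓ:ℤ)-1)}).Nonempty} ⊆ SB n := by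
      intro n ω hω
      simp only [Set.mem_setOf_eq, Set.not_nonempty_iff_eq_empty] at hω
      intro k _
      by_contra hk
      have hmemk : k ∈ {k : ℕ | posw 1 (fun i => Y i ω) k ∉ Set.Icc (1:ℤ) (2*(ℓ:ℤ)-1)} := hk
      rw [hω] at hmemk
      exact hmemk
    have hlim : Filter.Tendsto (fun n : ℕ => ENNReal.ofReal ((Real.cos a)^n))
        Filter.atTop (nhds 0) := by
      have h := ENNReal.tendsto_ofReal
        (tendsto_pow_atTop_nhds_zero_of_lt_one hcosa_pos.le hcosa_lt)
      simpa using h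
    exact le_antisymm
      (ge_of_tendsto' hlim (fun n => (measure_mono (hsub n)).trans (hmuSB n))) zero_le
  -- monotone convergence
  set f : ℕ → Ω → ℝ := fun n ω => Ew ℓ lam n 1 (fun i => Y i ω) with hfd
  set F : Ω → ℝ := fun ω => Real.exp (lam *
    (sInf {k : ℕ | posw 1 (fun i => Y i ω) k ∉ Set.Icc (1:ℤ) (2*(ℓ:ℤ)-1)} : ℕ)) with hFd
  have hfmeasn : ∀ n, Measurable (f n) := by
    intro n
    have h := Ew_meas Y hmeas ℓ lam n 1 0
    simpa using h
  have hmonof : ∀ ω, Monotone fun n => f n ω :=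
    fun ω => monotone_nat_of_le_succ (fun n => Ew_mono ℓ lam n 1 _)
  have hnonnegf : ∀ n ω, 0 ≤ f n ω := fun n ω => Ew_nonneg ℓ lam n 1 _
  have hfint : ∀ n, Integrable (f n) μ := by
    intro n
    refine (integrable_const (Real.exp (lam * n))).mono' (hfmeasn n).aestronglyMeasurable ?_
    filter_upwards with ω
    rw [Real.norm_eq_abs, abs_of_nonneg (hnonnegf n ω)]
    exact Ew_le_exp ℓ lam h0 n 1 _
  have htend : ∀ᵐ ω ∂μ, Filter.Tendsto (fun n => f n ω) Filter.atTop (nhds (F ω)) := by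
    filter_upwards [hnullne] with ω hne
    have hσ := Nat.sInf_mem hne
    refine tendsto_atTop_of_eventually_const
      (i₀ := sInf {k : ℕ | posw 1 (fun i => Y i ω) k ∉ Set.Icc (1:ℤ) (2*(ℓ:ℤ)-1)})
      (fun n hn => ?_)
    show Ew ℓ lam n 1 (fun i => Y i ω) = F ω
    rw [Ew_bridge, if_pos ⟨_, hn, hσ⟩, hFd]
  have hkey : ∫⁻ ω, ENNReal.ofReal (F ω) ∂μ = ENNReal.ofReal (hfun 1) := by
    have h1 : ∀ᵐ ω ∂μ, ENNReal.ofReal (F ω) = ⨆ n, ENNReal.ofReal (f n ω) := by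
      filter_upwards [htend] with ω hω
      exact (tendsto_nhds_unique
        (tendsto_atTop_iSup (fun n m hnm => ENNReal.ofReal_le_ofReal (hmonof ω hnm)))
        (ENNReal.tendsto_ofReal hω)).symm
    rw [lintegral_congr_ae h1, lintegral_iSup (fun n => (hfmeasn n).ennreal_ofReal)
      (fun n m hnm ω => ENNReal.ofReal_le_ofReal (hmonof ω hnm))]
    have h2 : ∀ n, ∫⁻ ω, ENNReal.ofReal (f n ω) ∂μ = ENNReal.ofReal (uw ℓ lam n 1) := by
      intro n
      rw [← ofReal_integral_eq_lintegral_ofReal (hfint n)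
        (Filter.Eventually.of_forall (hnonnegf n))]
      congr 1
      exact intE μ Y hmeas hindep hup hdown ℓ lam n 1
    simp only [h2]
    refine le_antisymm (iSup_le (fun n => ENNReal.ofReal_le_ofReal (huw_le_h n 1 hmem1))) ?_
    exact le_of_tendsto' (ENNReal.tendsto_ofReal huwlim)
      (fun n => le_iSup (fun n => ENNReal.ofReal (uw ℓ lam n 1)) n)
  have hFmeas : AEStronglyMeasurable F μ :=
    (aemeasurable_of_tendsto_metrizable_ae' (fun n => (hfmeasn n).aemeasurable)
      htend).aestronglyMeasurable
  have hFnn : 0 ≤ᵐ[μ] F := Filter.Eventually.of_forall (fun ω => (Real.exp_pos _).le)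
  have hfin : ∫ ω, F ω ∂μ = hfun 1 := by
    rw [integral_eq_lintegral_of_nonneg_ae hFnn hFmeas, hkey,
      ENNReal.toReal_ofReal (by linarith [hge1 1 hmem1])]
  calc ∫ ω, Real.exp (lam * (sInf {k : ℕ | (1 + ∑ i ∈ Finset.range k, Y i ω) ∉
          Set.Icc (1 : ℤ) (2 * ℓ - 1)} : ℕ)) ∂μ = ∫ ω, F ω ∂μ := rfl
    _ = hfun 1 := hfin
    _ = _ := by
      simp only [hfdef]
      rw [show ((1:ℤ):ℝ) - (ℓ:ℝ) = -((ℓ:ℝ) - 1) by push_cast; ring,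
        show c * -((ℓ:ℝ)-1) = -(c * ((ℓ:ℝ)-1)) by ring, Real.cos_neg]
end

section
/- Let 2ℓ be an integer greater than 1, let ε ∈ (0,1), and set λ(ε,ℓ) = (1−ε)²π²/(8ℓ²). Let σ be the first exit time from [1, 2ℓ−1] of a simple symmetric random walk started at 1. Then E[e^{λ(ε,ℓ)σ}] < 1 + C₁/ℓ, where C₁ = ((1−ε)π/2) · tan((1−ε)π/2). -/
open MeasureTheory ProbabilityTheory Real

lemma aux_sin_ge {t : ℝ} (h0 : 0 ≤ t) (h1 : t ≤ π/2) : 2*t ≤ Real.sin t * (2 + t^2) := by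
  rcases eq_or_lt_of_le h0 with rfl|h0'
  · simp
  rcases le_or_gt t 1 with hle|hgt
  · have hs := Real.sin_gt_sub_cube h0'
    have ht2 : t^2 ≤ 1 := by nlinarith
    nlinarith [pow_pos h0' 3]
  · have hs : (3:ℝ)/4 ≤ Real.sin t := by
      have h1' : Real.sin 1 ≤ Real.sin t := by
        apply Real.sin_le_sin_of_le_of_le_pi_div_two (by linarith [Real.pi_gt_three]) h1 hgt.le
      have := Real.sin_gt_sub_cube (by norm_num : (0:ℝ)<1)
      norm_num at this
      linarith
    nlinarith [sq_nonneg (t - 4/3)]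

-- cos t ≤ exp (−t²/2) on [0, π/2]
lemma aux_cos_le_exp {t : ℝ} (h0 : 0 ≤ t) (h1 : t ≤ π/2) :
    Real.cos t ≤ Real.exp (-(t^2/2)) := by
  set f : ℝ → ℝ := fun x => Real.exp (-(x^2/2)) - Real.cos x with hf
  have hd : ∀ x, HasDerivAt f (Real.sin x - x * Real.exp (-(x^2/2))) x := by
    intro x
    have h1 : HasDerivAt (fun x : ℝ => -(x^2/2)) (-x) x := by
      have := ((hasDerivAt_pow 2 x).div_const 2).neg
      exact this.congr_deriv (by ring)
    have h2 := (Real.hasDerivAt_exp (-(x^2/2))).comp x h1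
    have h3 := (Real.hasDerivAt_cos x)
    have := h2.sub h3
    exact this.congr_deriv (by ring)
  have hmono : MonotoneOn f (Set.Icc 0 (π/2)) := by
    apply monotoneOn_of_deriv_nonneg (convex_Icc _ _)
    · exact (Continuous.sub (by continuity) Real.continuous_cos).continuousOn
    · intro x hx
      exact (hd x).differentiableAt.differentiableWithinAt
    · intro x hx
      rw [interior_Icc] at hx
      rw [(hd x).deriv]
      have hxp : 0 ≤ x := hx.1.le
      have key : x * Real.exp (-(x^2/2)) ≤ Real.sin x := by
        have h2 : Real.exp (-(x^2/2)) * (1 + x^2/2) ≤ 1 := by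
          have h := Real.add_one_le_exp (x^2/2)
          have hp := Real.exp_pos (-(x^2/2))
          calc Real.exp (-(x^2/2)) * (1 + x^2/2) ≤ Real.exp (-(x^2/2)) * Real.exp (x^2/2) := by
                apply mul_le_mul_of_nonneg_left (by linarith) hp.le
            _ = 1 := by rw [← Real.exp_add]; simp
        have h3 := aux_sin_ge hxp hx.2.le
        have hp := Real.exp_pos (-(x^2/2))
        nlinarith
      linarith
  have h0' := hmono (Set.mem_Icc.2 ⟨le_rfl, by positivity⟩) (Set.mem_Icc.2 ⟨h0, h1⟩) h0
  simp only [hf] at h0'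
  norm_num at h0'
  linarith

-- arccos (exp (-l)) ≤ sqrt (2*l) for l ≥ 0
lemma aux_arccos_le {l : ℝ} (hl : 0 ≤ l) : Real.arccos (Real.exp (-l)) ≤ Real.sqrt (2*l) := by
  set t := Real.sqrt (2*l) with ht
  have ht0 : 0 ≤ t := Real.sqrt_nonneg _
  rcases le_or_gt t (π/2) with hle|hgt
  · have ht2 : t^2 = 2*l := Real.sq_sqrt (by linarith)
    have hc : Real.cos t ≤ Real.exp (-l) := by
      have := aux_cos_le_exp ht0 hle
      rw [ht2] at this
      convert this using 2
      ring
    calc Real.arccos (Real.exp (-l)) ≤ Real.arccos (Real.cos t) :=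
          by
            rw [Real.arccos, Real.arccos]
            have := Real.monotone_arcsin hc
            linarith
      _ = t := Real.arccos_cos ht0 (le_trans hle (by linarith [Real.pi_pos]))
  · have := Real.arccos_lt_pi_div_two.2 (Real.exp_pos (-l))
    linarith


lemma aux_div_bound {e c1 t E : ℝ} (he : 0 < e) (hc : 0 < c1) (ht : 0 ≤ t)
    (h : e * c1 * t ≤ c1) (hE : E * e = 1) : t ≤ E := by
  have hE' : e * E = 1 := by linarith [mul_comm E e]
  have het : e * t ≤ 1 := by nlinarith
  by_contra hgt
  push_neg at hgt
  have hlt := mul_lt_mul_of_pos_left hgt he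
  rw [hE'] at hlt
  linarith

lemma half_step {Ω : Type*} [MeasurableSpace Ω] (μ : Measure Ω) [IsProbabilityMeasure μ]
    (Y : ℕ → Ω → ℤ) (hmeas : ∀ i, Measurable (Y i))
    (hindep : iIndepFun Y μ) (n : ℕ) (y : ℤ)
    (hy : μ {ω | Y n ω = y} = 1/2)
    (H : ({ i // i ∈ Finset.range n } → ℤ) → ℝ) (hH : Measurable H) :
    ∫ ω, (H (fun i => Y i.1 ω) * if Y n ω = y then 1 else 0) ∂μ
      = (1/2) * ∫ ω, H (fun i => Y i.1 ω) ∂μ := by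
  have hdisj : Disjoint (Finset.range n) ({n} : Finset ℕ) := by
    simp [Finset.disjoint_left]
    omega
  have base := hindep.indepFun_finset (Finset.range n) {n} hdisj hmeas
  set ψ : ({ i // i ∈ ({n} : Finset ℕ) } → ℤ) → ℝ :=
    fun v => if v ⟨n, by simp⟩ = y then 1 else 0 with hψ
  have hψm : Measurable ψ := by
    apply Measurable.ite _ measurable_const measurable_const
    exact measurableSet_eq_fun (measurable_pi_apply _) measurable_const
  have comp := (base.comp hH hψm : IndepFun _ _ μ)
  have hvec : Measurable (fun ω (i : { i // i ∈ Finset.range n }) => Y i.1 ω) :=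
    measurable_pi_lambda _ fun i => hmeas i.1
  have hvec2 : Measurable (fun ω (i : { i // i ∈ ({n} : Finset ℕ) }) => Y i.1 ω) :=
    measurable_pi_lambda _ fun i => hmeas i.1
  have key := comp.integral_fun_mul_eq_mul_integral (hH.comp hvec).aestronglyMeasurable
      (hψm.comp hvec2).aestronglyMeasurable
  have h2 : (∫ ω, ψ (fun i => Y i.1 ω) ∂μ) = 1/2 := by
    have : (fun ω => ψ (fun i : { i // i ∈ ({n} : Finset ℕ) } => Y i.1 ω))
        = Set.indicator {ω | Y n ω = y} (fun _ => (1:ℝ)) := by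
      ext ω
      by_cases h : Y n ω = y
      · simp [hψ, h, Set.indicator_of_mem, Set.mem_setOf_eq]
      · simp [hψ, h, Set.indicator_of_notMem, Set.mem_setOf_eq]
    have hs : MeasurableSet {ω | Y n ω = y} := measurableSet_eq_fun (hmeas n) measurable_const
    rw [this, integral_indicator_const _ hs, measureReal_def, hy]
    simp [ENNReal.toReal_div]
  calc ∫ ω, (H (fun i => Y i.1 ω) * if Y n ω = y then 1 else 0) ∂μ
      = ∫ ω, H (fun i => Y i.1 ω) * ψ (fun i => Y i.1 ω) ∂μ := by rfl
    _ = (∫ ω, H (fun i => Y i.1 ω) ∂μ) * (∫ ω, ψ (fun i => Y i.1 ω) ∂μ) := key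
    _ = (1/2) * ∫ ω, H (fun i => Y i.1 ω) ∂μ := by rw [h2]; ring


set_option maxHeartbeats 1000000 in
/-- Let `σ` be the first exit time from `[1, 2ℓ-1]` of a simple symmetric random walk
`X_k = 1 + Y_1 + ⋯ + Y_k` started at `1` (i.i.d. fair `±1` steps `Y_i`), `ε ∈ (0,1)`,
and `λ(ε,ℓ) = (1-ε)²π²/(8ℓ²)`. Then `E[e^{λ(ε,ℓ)σ}] < 1 + C₁/ℓ`, where
`C₁ = ((1-ε)π/2)·tan((1-ε)π/2)`. -/
theorem stmt11 {Ω : Type*} [MeasurableSpace Ω] (μ : Measure Ω) [IsProbabilityMeasure μ]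
    (Y : ℕ → Ω → ℤ) (hmeas : ∀ i, Measurable (Y i))
    (hindep : iIndepFun Y μ)
    (hup : ∀ i, μ {ω | Y i ω = 1} = 1/2) (hdown : ∀ i, μ {ω | Y i ω = -1} = 1/2)
    (ℓ : ℕ) (hℓ : 1 ≤ ℓ) (ε : ℝ) (hε : ε ∈ Set.Ioo (0:ℝ) 1) :
    ∫ ω, Real.exp ((1 - ε) ^ 2 * Real.pi ^ 2 / (8 * (ℓ : ℝ) ^ 2) *
        (sInf {k : ℕ | (1 + ∑ i ∈ Finset.range k, Y i ω) ∉
          Set.Icc (1 : ℤ) (2 * ℓ - 1)} : ℕ)) ∂μ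
      < 1 + ((1 - ε) * Real.pi / 2) * Real.tan ((1 - ε) * Real.pi / 2) / ℓ := by
  obtain ⟨hε0, hε1⟩ := hε
  have hπ := Real.pi_pos
  have hℓ0 : (0:ℝ) < ℓ := by exact_mod_cast hℓ
  have hℓ1 : (1:ℝ) ≤ ℓ := by exact_mod_cast hℓ
  have h1ε : 0 < 1 - ε := by linarith
  set lam : ℝ := (1 - ε) ^ 2 * Real.pi ^ 2 / (8 * (ℓ : ℝ) ^ 2) with hlamdef
  have hlam : 0 < lam := by positivity
  set c : ℝ := Real.arccos (Real.exp (-lam)) with hcdef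
  have hexp1 : Real.exp (-lam) < 1 := by
    rw [Real.exp_lt_one_iff]; linarith
  have hcos : Real.cos c = Real.exp (-lam) :=
    Real.cos_arccos (by linarith [Real.exp_pos (-lam)]) hexp1.le
  have hc0 : 0 < c := Real.arccos_pos.2 hexp1
  have hcle : c ≤ (1 - ε) * Real.pi / (2 * ℓ) := by
    have h2lam : 2 * lam = ((1 - ε) * Real.pi / (2 * (ℓ:ℝ)))^2 := by
      rw [hlamdef]; field_simp; ring
    have h := aux_arccos_le hlam.le
    rwa [h2lam, Real.sqrt_sq (by positivity)] at h
  have hclpi : c * ℓ ≤ (1 - ε) * Real.pi / 2 := by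
    calc c * ℓ ≤ ((1 - ε) * Real.pi / (2 * ℓ)) * ℓ := mul_le_mul_of_nonneg_right hcle hℓ0.le
      _ = (1 - ε) * Real.pi / 2 := by field_simp
  have hhalf : (1 - ε) * Real.pi / 2 < Real.pi / 2 := by nlinarith
  have hclnn : (0:ℝ) ≤ c * ℓ := mul_nonneg hc0.le (Nat.cast_nonneg ℓ)
  have hcl2 : c * ℓ < Real.pi / 2 := lt_of_le_of_lt hclpi hhalf
  have hcoscl : 0 < Real.cos (c * ℓ) := Real.cos_pos_of_mem_Ioo ⟨by nlinarith, hcl2⟩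
  have hcosl1 : 0 < Real.cos (c * (ℓ - 1)) := by
    apply Real.cos_pos_of_mem_Ioo
    constructor
    · nlinarith [mul_nonneg hc0.le (by linarith : (0:ℝ) ≤ (ℓ:ℝ) - 1)]

    · nlinarith
  -- definitions
  set I : Set ℤ := Set.Icc 1 (2 * (ℓ:ℤ) - 1) with hIdef
  set X : ℕ → Ω → ℤ := fun k ω => 1 + ∑ i ∈ Finset.range k, Y i ω with hXdef
  set g : ℤ → ℝ := fun x => Real.cos (c * ((x:ℝ) - ℓ)) with hgdef
  set A : ℕ → Set Ω := fun j => {ω | X j ω ∉ I ∧ ∀ k < j, X k ω ∈ I} with hAdef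
  set B : ℕ → Set Ω := fun n => {ω | ∀ k ≤ n, X k ω ∈ I} with hBdef
  set τ : Ω → ℕ := fun ω => sInf {k | X k ω ∉ I} with hτdef
  set f : Ω → ℝ := fun ω => Real.exp (lam * (τ ω : ℕ)) with hfdef
  have hXm : ∀ k, Measurable (X k) := fun k =>
    measurable_const.add (Finset.measurable_sum _ fun i _ => hmeas i)
  have hAm : ∀ j, MeasurableSet (A j) := by
    intro j
    have : A j = (X j ⁻¹' Iᶜ) ∩ ⋂ k ∈ Finset.range j, X k ⁻¹' I := by
      ext ω; simp [hAdef]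
    rw [this]
    exact ((hXm j) trivial).inter
      (MeasurableSet.biInter (Finset.range j).countable_toSet fun k _ => (hXm k) trivial)
  have hBm : ∀ n, MeasurableSet (B n) := by
    intro n
    have : B n = ⋂ k ∈ Finset.range (n+1), X k ⁻¹' I := by
      ext ω; simp [hBdef, Nat.lt_succ_iff]
    rw [this]
    exact MeasurableSet.biInter (Finset.range (n+1)).countable_toSet fun k _ => (hXm k) trivial
  have hτeq : ∀ ω j, (X j ω ∉ I ∧ ∀ k < j, X k ω ∈ I) → τ ω = j := by
    intro ω j h
    obtain ⟨h1, h2⟩ := h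
    refine le_antisymm (Nat.sInf_le h1) ?_
    by_contra hlt
    push_neg at hlt
    have hne : {k | X k ω ∉ I}.Nonempty := ⟨j, h1⟩
    have := Nat.sInf_mem hne
    exact this (h2 _ hlt)
  have hτm : Measurable τ := by
    apply measurable_to_countable'
    intro j
    match j with
    | 0 =>
      have : τ ⁻¹' {0} = (X 0 ⁻¹' Iᶜ) ∪ ⋂ k, X k ⁻¹' I := by
        ext ω
        simp only [Set.mem_preimage, Set.mem_singleton_iff, Set.mem_union, Set.mem_compl_iff,
          Set.mem_iInter]
        show sInf {k | X k ω ∉ I} = 0 ↔ _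
        rw [Nat.sInf_eq_zero]
        constructor
        · rintro (h | h)
          · exact Or.inl h
          · exact Or.inr fun k => by_contra fun hk => (Set.eq_empty_iff_forall_notMem.1 h k) hk
        · rintro (h | h)
          · exact Or.inl h
          · exact Or.inr (Set.eq_empty_iff_forall_notMem.2 fun k hk => hk (h k))
      rw [this]
      exact ((hXm 0) trivial).union (MeasurableSet.iInter fun k => (hXm k) trivial)
    | (j+1) =>
      have : τ ⁻¹' {j+1} = A (j+1) := by
        ext ω
        simp only [Set.mem_preimage, Set.mem_singleton_iff, hAdef, Set.mem_setOf_eq]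
        constructor
        · intro h
          have h' : sInf {k | X k ω ∉ I} = j + 1 := h
          have hne : {k | X k ω ∉ I}.Nonempty := by
            by_contra hc
            rw [Set.not_nonempty_iff_eq_empty] at hc
            rw [hc, Nat.sInf_empty] at h'
            omega
          have hmem := Nat.sInf_mem hne
          rw [h'] at hmem
          refine ⟨hmem, fun k hk => ?_⟩
          by_contra hnk
          have hle := Nat.sInf_le (show k ∈ {k | X k ω ∉ I} from hnk)
          rw [h'] at hle
          omega
        · exact fun h => hτeq ω (j+1) h
      rw [this]; exact hAm (j+1)
  have hfm : Measurable f := by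
    apply Measurable.comp Real.measurable_exp
    exact measurable_const.mul (measurable_from_top.comp hτm)
  
  classical
  -- a.e. the steps are ±1
  have hae : ∀ᵐ ω ∂μ, ∀ i, Y i ω = 1 ∨ Y i ω = -1 := by
    rw [MeasureTheory.ae_all_iff]
    intro i
    have hm2 : MeasurableSet {ω | Y i ω = 1} := measurableSet_eq_fun (hmeas i) measurable_const
    have hm1 : MeasurableSet {ω | Y i ω = -1} := measurableSet_eq_fun (hmeas i) measurable_const
    have hdisj : Disjoint {ω | Y i ω = 1} {ω | Y i ω = -1} := by
      rw [Set.disjoint_left]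
      intro ω h1 h2
      simp only [Set.mem_setOf_eq] at h1 h2
      omega
    have hun : μ ({ω | Y i ω = 1} ∪ {ω | Y i ω = -1}) = 1 := by
      rw [measure_union hdisj hm1, hup i, hdown i, ENNReal.add_halves]
    have hcompl : μ ({ω | Y i ω = 1} ∪ {ω | Y i ω = -1})ᶜ = 0 :=
      (prob_compl_eq_zero_iff (hm2.union hm1)).2 hun
    rw [MeasureTheory.ae_iff]
    refine measure_mono_null ?_ hcompl
    intro ω h
    simp only [Set.mem_setOf_eq, Set.mem_compl_iff, Set.mem_union] at h ⊢
    tauto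
  -- integrability helpers
  have hbint : ∀ (h : Ω → ℝ) (C : ℝ), Measurable h → (∀ ω, |h ω| ≤ C) → Integrable h μ :=
    fun h C hm hb => (integrable_const C).mono' hm.aestronglyMeasurable
      (Filter.Eventually.of_forall fun ω => by simpa [Real.norm_eq_abs] using hb ω)
  have hindb : ∀ (s : Set Ω) (u : Ω → ℝ) (C : ℝ), 0 ≤ C → (∀ ω, |u ω| ≤ C) →
      ∀ ω, |s.indicator u ω| ≤ C := by
    intro s u C hC hu ω
    by_cases h : ω ∈ s
    · simpa [Set.indicator_of_mem h] using hu ω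
    · simpa [Set.indicator_of_notMem h] using hC
  have hgb : ∀ x, |g x| ≤ 1 := fun x => Real.abs_cos_le_one _
  set P : ℕ → Ω → ℝ :=
    fun j => (A j).indicator (fun ω => Real.exp (lam * j) * g (X j ω)) with hPdef
  set Q : ℕ → Ω → ℝ :=
    fun n => (B n).indicator (fun ω => Real.exp (lam * n) * g (X n ω)) with hQdef
  set F : ℕ → Ω → ℝ := fun n ω => (∑ j ∈ Finset.range (n+1), P j ω) + Q n ω with hFdef
  have hgXm : ∀ k, Measurable (fun ω => g (X k ω)) := fun k =>
    (measurable_from_top (f := g)).comp (hXm k)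
  have hPm : ∀ j, Measurable (P j) := fun j =>
    (measurable_const.mul (hgXm j)).indicator (hAm j)
  have hQm : ∀ n, Measurable (Q n) := fun n =>
    (measurable_const.mul (hgXm n)).indicator (hBm n)
  have hmulb : ∀ (j : ℕ) (ω : Ω), |Real.exp (lam * j) * g (X j ω)| ≤ Real.exp (lam * j) := by
    intro j ω
    rw [abs_mul, abs_of_pos (Real.exp_pos _)]
    calc Real.exp (lam * j) * |g (X j ω)| ≤ Real.exp (lam * j) * 1 :=
          mul_le_mul_of_nonneg_left (hgb _) (Real.exp_pos _).le
      _ = _ := mul_one _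
  have hPint : ∀ j, Integrable (P j) μ := fun j =>
    hbint _ (Real.exp (lam * j)) (hPm j) (hindb _ _ _ (Real.exp_pos _).le (hmulb j))
  have hQint : ∀ n, Integrable (Q n) μ := fun n =>
    hbint _ (Real.exp (lam * n)) (hQm n) (hindb _ _ _ (Real.exp_pos _).le (hmulb n))
  have hFint : ∀ n, Integrable (F n) μ := fun n =>
    (integrable_finset_sum _ fun j _ => hPint j).add (hQint n)
  have hg1 : g 1 = Real.cos (c * (ℓ - 1)) := by
    have : c * (((1:ℤ):ℝ) - ℓ) = -(c * (ℓ - 1)) := by push_cast; ring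
    rw [hgdef]
    simp only
    rw [this, Real.cos_neg]
  have h1I : (1:ℤ) ∈ I := by
    simp only [hIdef, Set.mem_Icc]
    omega
  have hX0 : ∀ ω, X 0 ω = 1 := by intro ω; simp [hXdef]
  have hkey : ∀ n, ∫ ω, F n ω ∂μ = g 1 := by
    intro n
    induction n with
    | zero =>
      have hA0 : A 0 = ∅ := by
        ext ω
        simp only [hAdef, Set.mem_setOf_eq, Set.mem_empty_iff_false, iff_false, not_and]
        intro h
        exact absurd (hX0 ω ▸ h1I) h
      have hB0 : B 0 = Set.univ := by
        ext ω
        simp only [hBdef, Set.mem_setOf_eq, Set.mem_univ, iff_true]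
        intro k hk
        rw [Nat.le_zero.1 hk, hX0 ω]
        exact h1I
      have hF0 : ∀ ω, F 0 ω = g 1 := by
        intro ω
        simp only [hFdef, hPdef, hQdef, hA0, hB0, Finset.range_one, Finset.sum_singleton,
          Set.indicator_empty, Set.indicator_univ, Pi.zero_apply, Nat.cast_zero, mul_zero,
          Real.exp_zero, one_mul, zero_add, hX0 ω]
      rw [integral_congr_ae (Filter.Eventually.of_forall hF0), integral_const]
      simp
    | succ n ih =>
      have hstep : ∀ ω, F (n+1) ω = F n ω +
          ((B n).indicator (fun ω' => Real.exp (lam * ((n+1:ℕ):ℝ)) * g (X (n+1) ω')) ω - Q n ω) := by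
        intro ω
        have hsum : (∑ j ∈ Finset.range (n+1+1), P j ω)
            = (∑ j ∈ Finset.range (n+1), P j ω) + P (n+1) ω := Finset.sum_range_succ _ _
        have hPQ : P (n+1) ω + Q (n+1) ω
            = (B n).indicator (fun ω' => Real.exp (lam * ((n+1:ℕ):ℝ)) * g (X (n+1) ω')) ω := by
          by_cases hbn : ω ∈ B n
          · rw [Set.indicator_of_mem hbn]
            by_cases hx : X (n+1) ω ∈ I
            · have hA1 : ω ∉ A (n+1) := fun h => h.1 hx
              have hB1 : ω ∈ B (n+1) := by
                intro k hk
                rcases Nat.lt_succ_iff_lt_or_eq.1 (Nat.lt_succ_of_le hk) with h | h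
                · exact hbn k (Nat.lt_succ_iff.1 h)
                · rw [h]; exact hx
              rw [hPdef, hQdef]
              simp only [Set.indicator_of_notMem hA1, Set.indicator_of_mem hB1, zero_add]
            · have hA1 : ω ∈ A (n+1) := ⟨hx, fun k hk => hbn k (Nat.lt_succ_iff.1 hk)⟩
              have hB1 : ω ∉ B (n+1) := fun h => hx (h (n+1) le_rfl)
              rw [hPdef, hQdef]
              simp only [Set.indicator_of_mem hA1, Set.indicator_of_notMem hB1, add_zero]
          · have hA1 : ω ∉ A (n+1) := fun h => hbn (fun k hk => h.2 k (Nat.lt_succ_of_le hk))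
            have hB1 : ω ∉ B (n+1) := fun h => hbn (fun k hk => h k (hk.trans (Nat.le_succ n)))
            rw [Set.indicator_of_notMem hbn, hPdef, hQdef]
            simp only [Set.indicator_of_notMem hA1, Set.indicator_of_notMem hB1, add_zero]
        simp only [hFdef]
        rw [hsum, ← hPQ]
        ring
      have hRm : Measurable ((B n).indicator
          (fun ω' => Real.exp (lam * ((n+1:ℕ):ℝ)) * g (X (n+1) ω'))) :=
        (measurable_const.mul (hgXm (n+1))).indicator (hBm n)
      have hRint : Integrable ((B n).indicator
          (fun ω' => Real.exp (lam * ((n+1:ℕ):ℝ)) * g (X (n+1) ω'))) μ :=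
        hbint _ (Real.exp (lam * ((n+1:ℕ):ℝ))) hRm
          (hindb _ _ _ (Real.exp_pos _).le (fun ω => hmulb (n+1) ω))
      have hIeq : ∫ ω, F (n+1) ω ∂μ = ∫ ω, F n ω ∂μ +
          ((∫ ω, (B n).indicator (fun ω' => Real.exp (lam * ((n+1:ℕ):ℝ)) * g (X (n+1) ω')) ω ∂μ)
            - ∫ ω, Q n ω ∂μ) := by
        rw [integral_congr_ae (Filter.Eventually.of_forall hstep)]
        have hsubint : Integrable (fun ω =>
            (B n).indicator (fun ω' => Real.exp (lam * ((n+1:ℕ):ℝ)) * g (X (n+1) ω')) ω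
              - Q n ω) μ := hRint.sub (hQint n)
        rw [integral_add (hFint n) hsubint, integral_sub hRint (hQint n)]
      have hcore : ∫ ω, (B n).indicator (fun ω' => g (X (n+1) ω')) ω ∂μ
          = Real.exp (-lam) * ∫ ω, (B n).indicator (fun ω' => g (X n ω')) ω ∂μ := by
        set vv : ({ i // i ∈ Finset.range n } → ℤ) → ℕ → ℤ :=
          fun v j => if h : j ∈ Finset.range n then v ⟨j, h⟩ else 0 with hvvdef
        set HH : ℤ → ({ i // i ∈ Finset.range n } → ℤ) → ℝ := fun d v =>
          if (∀ k ≤ n, (1 + ∑ i ∈ Finset.range k, vv v i) ∈ I)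
          then g ((1 + ∑ i ∈ Finset.range n, vv v i) + d) else 0 with hHHdef
        have hvm : ∀ i : ℕ, Measurable (fun v => vv v i) := by
          intro i
          by_cases h : i ∈ Finset.range n
          · simp only [hvvdef, dif_pos h]
            exact measurable_pi_apply _
          · simp only [hvvdef, dif_neg h]
            exact measurable_const
        have hsm : ∀ k : ℕ, Measurable (fun v => (1 + ∑ i ∈ Finset.range k, vv v i : ℤ)) :=
          fun k => measurable_const.add (Finset.measurable_sum _ fun i _ => hvm i)
        have hHHm : ∀ d, Measurable (HH d) := by
          intro d
          apply Measurable.ite _ _ measurable_const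
          · have hset : {v | ∀ k ≤ n, (1 + ∑ i ∈ Finset.range k, vv v i) ∈ I}
                = ⋂ k ∈ Finset.range (n+1),
                    (fun v => (1 + ∑ i ∈ Finset.range k, vv v i : ℤ)) ⁻¹' I := by
              ext v; simp [Nat.lt_succ_iff]
            rw [hset]
            exact MeasurableSet.biInter (Finset.range (n+1)).countable_toSet
              fun k _ => (hsm k) trivial
          · exact (measurable_from_top (f := g)).comp ((hsm n).add measurable_const)
        have hHeval : ∀ (d : ℤ) (ω : Ω), HH d (fun i => Y i.1 ω)
            = (B n).indicator (fun ω' => g (X n ω' + d)) ω := by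
          intro d ω
          have hsum : ∀ k, k ≤ n → (∑ i ∈ Finset.range k, vv (fun i => Y i.1 ω) i)
              = ∑ i ∈ Finset.range k, Y i ω := by
            intro k hk
            refine Finset.sum_congr rfl fun i hi => ?_
            simp only [Finset.mem_range] at hi
            simp only [hvvdef, dif_pos (Finset.mem_range.2 (lt_of_lt_of_le hi hk))]
          have hcond : (∀ k ≤ n, (1 + ∑ i ∈ Finset.range k, vv (fun i => Y i.1 ω) i) ∈ I)
              ↔ ω ∈ B n := by
            constructor
            · intro h k hk
              have := h k hk
              rwa [hsum k hk] at this
            · intro h k hk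
              rw [hsum k hk]
              exact h k hk
          by_cases hb : ω ∈ B n
          · rw [Set.indicator_of_mem hb, hHHdef]
            simp only
            rw [if_pos (hcond.2 hb), hsum n le_rfl]
          · rw [Set.indicator_of_notMem hb, hHHdef]
            simp only
            rw [if_neg (fun h => hb (hcond.1 h))]
        have h1 := half_step μ Y hmeas hindep n 1 (hup n) (HH 1) (hHHm 1)
        have h2 := half_step μ Y hmeas hindep n (-1) (hdown n) (HH (-1)) (hHHm (-1))
        simp only [hHeval] at h1 h2
        have hXsucc : ∀ ω, X (n+1) ω = X n ω + Y n ω := by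
          intro ω
          simp only [hXdef, Finset.sum_range_succ]
          ring
        have hdecomp : ∀ᵐ ω ∂μ, (B n).indicator (fun ω' => g (X (n+1) ω')) ω
            = ((B n).indicator (fun ω' => g (X n ω' + 1)) ω * if Y n ω = 1 then 1 else 0)
            + ((B n).indicator (fun ω' => g (X n ω' + (-1))) ω * if Y n ω = (-1) then 1 else 0) := by
          filter_upwards [hae] with ω hω
          by_cases hb : ω ∈ B n
          · rcases hω n with h | h
            · rw [if_pos h, if_neg (by omega : ¬ Y n ω = -1)]
              simp only [Set.indicator_of_mem hb]
              rw [hXsucc ω, h]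
              ring
            · rw [if_neg (by omega : ¬ Y n ω = 1), if_pos h]
              simp only [Set.indicator_of_mem hb]
              rw [hXsucc ω, h]
              ring
          · simp [Set.indicator_of_notMem hb]
        have hmb : ∀ (d : ℤ) (y : ℤ), Integrable (fun ω =>
            (B n).indicator (fun ω' => g (X n ω' + d)) ω * if Y n ω = y then 1 else 0) μ := by
          intro d y
          apply hbint _ 1
          · exact (((measurable_from_top (f := fun x : ℤ => g (x + d))).comp (hXm n)).indicator
              (hBm n)).mul (Measurable.ite (measurableSet_eq_fun (hmeas n) measurable_const)
                measurable_const measurable_const)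
          · intro ω
            rw [abs_mul]
            have ha : |(B n).indicator (fun ω' => g (X n ω' + d)) ω| ≤ 1 :=
              hindb _ _ _ zero_le_one (fun ω' => hgb _) ω
            have hbb : |if Y n ω = y then (1:ℝ) else 0| ≤ 1 := by
              split <;> norm_num
            calc |(B n).indicator (fun ω' => g (X n ω' + d)) ω| * |if Y n ω = y then (1:ℝ) else 0|
                ≤ 1 * 1 := mul_le_mul ha hbb (abs_nonneg _) zero_le_one
              _ = 1 := one_mul 1
        have hib : ∀ d : ℤ, Integrable (fun ω => (B n).indicator (fun ω' => g (X n ω' + d)) ω) μ := by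
          intro d
          apply hbint _ 1
          · exact ((measurable_from_top (f := fun x : ℤ => g (x + d))).comp (hXm n)).indicator (hBm n)
          · exact fun ω => hindb _ _ _ zero_le_one (fun ω' => hgb _) ω
        rw [integral_congr_ae hdecomp, integral_add (hmb 1 1) (hmb (-1) (-1)), h1, h2]
        have htrig : ∀ x : ℤ, (1/2) * g (x+1) + (1/2) * g (x + (-1)) = Real.exp (-lam) * g x := by
          intro x
          have e1 : ((x + 1 : ℤ):ℝ) = (x:ℝ) + 1 := by push_cast; ring
          have e2 : ((x + (-1) : ℤ):ℝ) = (x:ℝ) - 1 := by push_cast; ring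
          simp only [hgdef, e1, e2]
          have b1 : c * ((x:ℝ) + 1 - ℓ) = c * ((x:ℝ) - ℓ) + c := by ring
          have b2 : c * ((x:ℝ) - 1 - ℓ) = c * ((x:ℝ) - ℓ) - c := by ring
          rw [b1, b2, Real.cos_add, Real.cos_sub, hcos]
          ring
        rw [← integral_const_mul, ← integral_const_mul,
          ← integral_add ((hib 1).const_mul _) ((hib (-1)).const_mul _), ← integral_const_mul]
        apply integral_congr_ae
        apply Filter.Eventually.of_forall
        intro ω
        by_cases hb : ω ∈ B n
        · simp only [Set.indicator_of_mem hb]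
          exact htrig (X n ω)
        · simp only [Set.indicator_of_notMem hb]
          ring
      have hpull : ∀ (s : Set Ω) (K : ℝ) (u : Ω → ℝ) (ω : Ω),
          s.indicator (fun ω' => K * u ω') ω = K * s.indicator u ω := by
        intro s K u ω; by_cases h : ω ∈ s <;> simp [h]
      have hfinal : ∫ ω, (B n).indicator
            (fun ω' => Real.exp (lam * ((n+1:ℕ):ℝ)) * g (X (n+1) ω')) ω ∂μ
          = ∫ ω, Q n ω ∂μ := by
        simp_rw [hpull]
        rw [integral_const_mul, hcore, hQdef]
        simp only
        simp_rw [hpull]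
        rw [integral_const_mul, ← mul_assoc, ← Real.exp_add]
        congr 2
        push_cast
        ring
      rw [hIeq, hfinal, sub_self, add_zero, ih]
  
  -- geometry of the exit position
  have hgood : ∀ ω, (∀ i, Y i ω = 1 ∨ Y i ω = -1) → ∀ j, ω ∈ A j →
      g (X j ω) = Real.cos (c * ℓ) := by
    intro ω hω j hj
    match j with
    | 0 => exact absurd (hX0 ω ▸ h1I) hj.1
    | (m+1) =>
      have hXm' : X m ω ∈ I := hj.2 m (Nat.lt_succ_self m)
      have hXs : X (m+1) ω = X m ω + Y m ω := by
        simp only [hXdef, Finset.sum_range_succ]; ring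
      have hXout : X (m+1) ω ∉ I := hj.1
      have hval : X (m+1) ω = 0 ∨ X (m+1) ω = 2 * (ℓ:ℤ) := by
        simp only [hIdef, Set.mem_Icc] at hXm' hXout
        rcases hω m with h | h <;> rw [hXs, h] <;> rw [hXs, h] at hXout <;> omega
      rcases hval with h | h <;> rw [h]
      · simp only [hgdef]
        have harg : c * (((0:ℤ):ℝ) - ℓ) = -(c * ℓ) := by push_cast; ring
        rw [harg, Real.cos_neg]
      · simp only [hgdef]
        have harg : c * (((2 * (ℓ:ℤ) :ℤ):ℝ) - ℓ) = c * ℓ := by push_cast; ring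
        rw [harg]
  have hAdisj : ∀ ω j j', ω ∈ A j → ω ∈ A j' → j = j' := by
    intro ω j j' h h'
    rcases lt_trichotomy j j' with hlt | heq | hlt
    · exact absurd (h'.2 j hlt) h.1
    · exact heq
    · exact absurd (h.2 j' hlt) h'.1
  have hfirst : ∀ ω n, ω ∉ B n → (τ ω ≤ n ∧ ω ∈ A (τ ω)) := by
    intro ω n hb
    have hex : ∃ k, k ≤ n ∧ X k ω ∉ I := by
      by_contra hc
      push_neg at hc
      exact hb fun k hk => hc k hk
    obtain ⟨k, hk, hkI⟩ := hex
    have hne : {k | X k ω ∉ I}.Nonempty := ⟨k, hkI⟩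
    have hmem : X (τ ω) ω ∉ I := Nat.sInf_mem hne
    have hle : τ ω ≤ k := Nat.sInf_le hkI
    refine ⟨hle.trans hk, hmem, fun m hm => ?_⟩
    by_contra hmI
    have h2 : τ ω ≤ m := Nat.sInf_le hmI
    omega
  have hgin : ∀ x : ℤ, x ∈ I → Real.cos (c * (ℓ - 1)) ≤ g x := by
    intro x hx
    simp only [hIdef, Set.mem_Icc] at hx
    have hx1 : (1:ℝ) ≤ (x:ℝ) := by exact_mod_cast hx.1
    have hx2 : (x:ℝ) ≤ 2*(ℓ:ℝ) - 1 := by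
      have h2 := hx.2
      have : ((x:ℤ):ℝ) ≤ ((2 * (ℓ:ℤ) - 1 : ℤ) : ℝ) := by exact_mod_cast h2
      push_cast at this
      linarith
    have habs : |c * ((x:ℝ) - ℓ)| ≤ c * (ℓ - 1) := by
      rw [abs_mul, abs_of_pos hc0]
      apply mul_le_mul_of_nonneg_left _ hc0.le
      rw [abs_le]
      constructor <;> linarith
    simp only [hgdef]
    rw [← Real.cos_abs (c * ((x:ℝ) - ℓ))]
    apply Real.cos_le_cos_of_nonneg_of_le_pi (abs_nonneg _) _ habs
    have hstep2 : c * ((ℓ:ℝ) - 1) ≤ c * ℓ := mul_le_mul_of_nonneg_left (by linarith) hc0.le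
    linarith
  set sig : ℕ → Ω → ℝ := fun n ω => ∑ j ∈ Finset.range (n+1), (A j).indicator f ω with hsigdef
  have hsigm : ∀ n, Measurable (sig n) := fun n =>
    Finset.measurable_sum _ fun j _ => hfm.indicator (hAm j)
  have hsig_nonneg : ∀ n ω, 0 ≤ sig n ω := fun n ω =>
    Finset.sum_nonneg fun j _ => Set.indicator_nonneg (fun ω' _ => (Real.exp_pos _).le) ω
  have hindfb : ∀ j ω, |(A j).indicator f ω| ≤ Real.exp (lam * j) := by
    intro j ω
    by_cases h : ω ∈ A j
    · rw [Set.indicator_of_mem h, hfdef]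
      simp only
      rw [hτeq ω j h, abs_of_pos (Real.exp_pos _)]
    · rw [Set.indicator_of_notMem h]
      simpa using (Real.exp_pos (lam * j)).le
  have hsigint : ∀ n, Integrable (sig n) μ := fun n =>
    integrable_finset_sum _ fun j _ =>
      hbint _ (Real.exp (lam * j)) (hfm.indicator (hAm j)) (hindfb j)
  have hBind_int : ∀ n, Integrable ((B n).indicator (fun _ => (1:ℝ))) μ := fun n =>
    hbint _ 1 (measurable_const.indicator (hBm n))
      (hindb _ _ _ zero_le_one fun _ => by norm_num)
  have hsig_eq : ∀ ω n, ω ∉ B n → sig n ω = f ω := by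
    intro ω n hb
    obtain ⟨hτn, hA'⟩ := hfirst ω n hb
    rw [hsigdef]
    simp only
    rw [Finset.sum_eq_single (τ ω)]
    · rw [Set.indicator_of_mem hA']
    · intro j' hj' hne
      exact Set.indicator_of_notMem (fun h => hne (hAdisj ω j' (τ ω) h hA')) _
    · intro hj
      exact absurd (Finset.mem_range.2 (Nat.lt_succ_of_le hτn)) hj
  have hpoint : ∀ᵐ ω ∂μ, ∀ n, Real.cos (c * ℓ) * sig n ω
      + Real.exp (lam * n) * Real.cos (c * (ℓ - 1)) * (B n).indicator (fun _ => (1:ℝ)) ω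
      ≤ F n ω := by
    filter_upwards [hae] with ω hω
    intro n
    by_cases hb : ω ∈ B n
    · have hsig0 : sig n ω = 0 := Finset.sum_eq_zero fun j hj => by
        exact Set.indicator_of_notMem
          (fun h => h.1 (hb j (Nat.lt_succ_iff.1 (Finset.mem_range.1 hj)))) _
      have hP0 : ∀ j ∈ Finset.range (n+1), P j ω = 0 := fun j hj => by
        rw [hPdef]
        simp only
        exact Set.indicator_of_notMem
          (fun h => h.1 (hb j (Nat.lt_succ_iff.1 (Finset.mem_range.1 hj)))) _
      have hFn : F n ω = Real.exp (lam*n) * g (X n ω) := by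
        simp only [hFdef]
        rw [Finset.sum_eq_zero hP0, zero_add, hQdef]
        simp only
        rw [Set.indicator_of_mem hb]
      have hgx := hgin (X n ω) (hb n le_rfl)
      rw [hFn, hsig0]
      simp only [Set.indicator_of_mem hb, mul_zero, zero_add, mul_one]
      exact mul_le_mul_of_nonneg_left hgx (Real.exp_pos _).le
    · obtain ⟨hτn, hA'⟩ := hfirst ω n hb
      have hfω : f ω = Real.exp (lam * (τ ω : ℕ)) := rfl
      have hFn : F n ω = Real.exp (lam * (τ ω : ℕ)) * Real.cos (c*ℓ) := by
        simp only [hFdef]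
        have hQ0 : Q n ω = 0 := by
          rw [hQdef]; simp only; rw [Set.indicator_of_notMem hb]
        rw [hQ0, add_zero, Finset.sum_eq_single (τ ω)]
        · rw [hPdef]
          simp only
          rw [Set.indicator_of_mem hA', hgood ω hω (τ ω) hA']
        · intro j' hj' hne
          rw [hPdef]
          simp only
          exact Set.indicator_of_notMem (fun h => hne (hAdisj ω j' (τ ω) h hA')) _
        · intro hj
          exact absurd (Finset.mem_range.2 (Nat.lt_succ_of_le hτn)) hj
      rw [hFn, hsig_eq ω n hb, hfω, Set.indicator_of_notMem hb, mul_zero, add_zero, mul_comm]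
  have hineq : ∀ n, Real.cos (c * ℓ) * ∫ ω, sig n ω ∂μ
      + Real.exp (lam * n) * Real.cos (c * (ℓ - 1)) * (μ (B n)).toReal
      ≤ Real.cos (c * (ℓ - 1)) := by
    intro n
    have hLint : Integrable (fun ω => Real.cos (c*ℓ) * sig n ω
        + Real.exp (lam*n) * Real.cos (c*(ℓ-1)) * (B n).indicator (fun _ => (1:ℝ)) ω) μ :=
      ((hsigint n).const_mul _).add ((hBind_int n).const_mul _)
    have hmono' := integral_mono_ae hLint (hFint n) (hpoint.mono fun ω h => h n)
    rw [hkey n, hg1] at hmono'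
    have hLeq : ∫ ω, (Real.cos (c*ℓ) * sig n ω
        + Real.exp (lam*n) * Real.cos (c*(ℓ-1)) * (B n).indicator (fun _ => (1:ℝ)) ω) ∂μ
        = Real.cos (c*ℓ) * ∫ ω, sig n ω ∂μ
          + Real.exp (lam*n) * Real.cos (c*(ℓ-1)) * (μ (B n)).toReal := by
      rw [integral_add ((hsigint n).const_mul _) ((hBind_int n).const_mul _),
        integral_const_mul, integral_const_mul, integral_indicator_const (1:ℝ) (hBm n),
        smul_eq_mul, mul_one]
      rfl
    rw [hLeq] at hmono'
    exact hmono'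
  have hsig_int_nonneg : ∀ n, 0 ≤ ∫ ω, sig n ω ∂μ := fun n =>
    integral_nonneg (hsig_nonneg n)
  have hμB : ∀ n : ℕ, (μ (B n)).toReal ≤ Real.exp (-(lam * n)) := by
    intro n
    have h := hineq n
    have h2 : Real.exp (lam*n) * Real.cos (c*(ℓ-1)) * (μ (B n)).toReal
        ≤ Real.cos (c*(ℓ-1)) := by
      linarith [mul_nonneg hcoscl.le (hsig_int_nonneg n)]
    have hmul : Real.exp (-(lam*n)) * Real.exp (lam*n) = 1 := by
      rw [← Real.exp_add]; simp
    exact aux_div_bound (Real.exp_pos _) hcosl1 ENNReal.toReal_nonneg h2 hmul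
  set KK : ℝ := Real.cos (c * (ℓ - 1)) / Real.cos (c * ℓ) with hKdef
  have hsigK : ∀ n, ∫ ω, sig n ω ∂μ ≤ KK := by
    intro n
    have h := hineq n
    have hB0 : 0 ≤ Real.exp (lam*n) * Real.cos (c*(ℓ-1)) * (μ (B n)).toReal :=
      mul_nonneg (mul_nonneg (Real.exp_pos _).le hcosl1.le) ENNReal.toReal_nonneg
    rw [hKdef, le_div_iff₀ hcoscl]
    linarith [mul_comm (∫ ω, sig n ω ∂μ) (Real.cos (c*(ℓ:ℝ)))]
  set fseq : ℕ → Ω → ℝ := fun n ω => sig n ω + (B n).indicator (fun _ => (1:ℝ)) ω with hfseqdef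
  have hfseqint : ∀ n, Integrable (fseq n) μ := fun n => (hsigint n).add (hBind_int n)
  have hfseq_nonneg : ∀ n ω, 0 ≤ fseq n ω := fun n ω =>
    add_nonneg (hsig_nonneg n ω) (Set.indicator_nonneg (fun _ _ => zero_le_one) ω)
  have hf1 : ∀ ω, 1 ≤ f ω := fun ω => Real.one_le_exp (by positivity)
  have hmono : ∀ ω, Monotone fun n => fseq n ω := by
    intro ω
    apply monotone_nat_of_le_succ
    intro n
    simp only [hfseqdef, hsigdef]
    conv_rhs => rw [Finset.sum_range_succ]
    have hkey2 : (B n).indicator (fun _ => (1:ℝ)) ω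
        ≤ (A (n+1)).indicator f ω + (B (n+1)).indicator (fun _ => (1:ℝ)) ω := by
      by_cases hb : ω ∈ B n
      · rw [Set.indicator_of_mem hb]
        by_cases hx : X (n+1) ω ∈ I
        · have hB1 : ω ∈ B (n+1) := by
            intro k hk
            rcases Nat.lt_succ_iff_lt_or_eq.1 (Nat.lt_succ_of_le hk) with h | h
            · exact hb k (Nat.lt_succ_iff.1 h)
            · rw [h]; exact hx
          have hA1 : ω ∉ A (n+1) := fun h => h.1 hx
          rw [Set.indicator_of_mem hB1, Set.indicator_of_notMem hA1]
          norm_num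
        · have hA1 : ω ∈ A (n+1) := ⟨hx, fun k hk => hb k (Nat.lt_succ_iff.1 hk)⟩
          rw [Set.indicator_of_mem hA1]
          have hnn : (0:ℝ) ≤ (B (n+1)).indicator (fun _ => (1:ℝ)) ω :=
            Set.indicator_nonneg (fun _ _ => zero_le_one) ω
          linarith [hf1 ω]
      · rw [Set.indicator_of_notMem hb]
        have h1 : (0:ℝ) ≤ (A (n+1)).indicator f ω :=
          Set.indicator_nonneg (fun ω' _ => (Real.exp_pos _).le) ω
        have h2 : (0:ℝ) ≤ (B (n+1)).indicator (fun _ => (1:ℝ)) ω :=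
          Set.indicator_nonneg (fun _ _ => zero_le_one) ω
        linarith
    linarith
  have htend : ∀ ω, Filter.Tendsto (fun n => fseq n ω) Filter.atTop (nhds (f ω)) := by
    intro ω
    by_cases hex : ∃ k, X k ω ∉ I
    · obtain ⟨k, hk⟩ := hex
      apply tendsto_atTop_of_eventually_const (i₀ := k)
      intro n hn
      have hb : ω ∉ B n := fun h => hk (h k hn)
      simp only [hfseqdef]
      rw [hsig_eq ω n hb, Set.indicator_of_notMem hb, add_zero]
    · push_neg at hex
      have hb : ∀ n : ℕ, ω ∈ B n := fun n k _ => hex k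
      have hsig0 : ∀ n, sig n ω = 0 := fun n => Finset.sum_eq_zero fun j hj =>
        Set.indicator_of_notMem (fun h => h.1 (hex j)) _
      have hfs : ∀ n, fseq n ω = 1 := by
        intro n
        simp only [hfseqdef]
        rw [hsig0, Set.indicator_of_mem (hb n), zero_add]
      have hfω : f ω = 1 := by
        have hempty : {k | X k ω ∉ I} = ∅ :=
          Set.eq_empty_iff_forall_notMem.2 fun k h => h (hex k)
        have hτ0 : τ ω = 0 := by
          show sInf {k | X k ω ∉ I} = 0
          rw [hempty, Nat.sInf_empty]
        rw [hfdef]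
        simp only
        rw [hτ0]
        norm_num
      rw [hfω]
      simp only [hfs]
      exact tendsto_const_nhds
  have hfnonneg : ∀ ω, 0 ≤ f ω := fun ω => (Real.exp_pos _).le
  have hfseqI : ∀ n, ∫ ω, fseq n ω ∂μ = ∫ ω, sig n ω ∂μ + (μ (B n)).toReal := by
    intro n
    simp only [hfseqdef]
    rw [integral_add (hsigint n) (hBind_int n), integral_indicator_const (1:ℝ) (hBm n)]
    simp
    rfl
  have hfseqb : ∀ n, ∫ ω, fseq n ω ∂μ ≤ KK + Real.exp (-(lam * n)) := by
    intro n
    rw [hfseqI n]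
    have := hsigK n
    have := hμB n
    linarith
  have hfint : Integrable f μ := by
    refine ⟨hfm.aestronglyMeasurable, ?_⟩
    rw [hasFiniteIntegral_iff_ofReal (Filter.Eventually.of_forall hfnonneg)]
    have hsup : ∫⁻ ω, ENNReal.ofReal (f ω) ∂μ
        = ⨆ n, ∫⁻ ω, ENNReal.ofReal (fseq n ω) ∂μ := by
      rw [← lintegral_iSup' (f := fun n ω => ENNReal.ofReal (fseq n ω)) (fun n => ((hsigm n).add
          (measurable_const.indicator (hBm n))).ennreal_ofReal.aemeasurable)
        (Filter.Eventually.of_forall fun ω a b hab => ENNReal.ofReal_le_ofReal (hmono ω hab))]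
      apply lintegral_congr
      intro ω
      have h1 : Filter.Tendsto (fun n => ENNReal.ofReal (fseq n ω)) Filter.atTop
          (nhds (ENNReal.ofReal (f ω))) :=
        (ENNReal.continuous_ofReal.tendsto _).comp (htend ω)
      have h2 : Filter.Tendsto (fun n => ENNReal.ofReal (fseq n ω)) Filter.atTop
          (nhds (⨆ n, ENNReal.ofReal (fseq n ω))) :=
        tendsto_atTop_iSup (fun a b hab => ENNReal.ofReal_le_ofReal (hmono ω hab))
      exact tendsto_nhds_unique h1 h2
    rw [hsup]
    refine lt_of_le_of_lt (iSup_le fun n => ?_) (ENNReal.ofReal_lt_top (r := KK + 1))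
    rw [← ofReal_integral_eq_lintegral_ofReal (hfseqint n)
      (Filter.Eventually.of_forall (hfseq_nonneg n))]
    apply ENNReal.ofReal_le_ofReal
    have h1 := hfseqb n
    have h2 : Real.exp (-(lam * n)) ≤ 1 := by
      rw [Real.exp_le_one_iff]
      have h0 : (0:ℝ) ≤ lam * n := by positivity
      linarith
    linarith
  have hlim := integral_tendsto_of_tendsto_of_monotone hfseqint hfint
    (Filter.Eventually.of_forall hmono) (Filter.Eventually.of_forall htend)
  have htendK : Filter.Tendsto (fun n : ℕ => KK + Real.exp (-(lam * n)))
      Filter.atTop (nhds (KK + 0)) := by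
    apply Filter.Tendsto.const_add
    have hEq : ∀ n : ℕ, Real.exp (-(lam * n)) = (Real.exp (-lam))^n := by
      intro n
      rw [← Real.exp_nat_mul]
      congr 1
      ring
    simp only [hEq]
    exact tendsto_pow_atTop_nhds_zero_of_lt_one (Real.exp_pos _).le hexp1
  have hle : ∫ ω, f ω ∂μ ≤ KK + 0 :=
    le_of_tendsto_of_tendsto' hlim htendK hfseqb
  rw [add_zero] at hle
  have hKlt : KK < 1 + ((1 - ε) * Real.pi / 2) * Real.tan ((1 - ε) * Real.pi / 2) / ℓ := by
    have hsplit : KK = Real.cos c + Real.tan (c * ℓ) * Real.sin c := by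
      rw [hKdef]
      have harg : c * ((ℓ:ℝ) - 1) = c * ℓ - c := by ring
      rw [harg, Real.cos_sub, Real.tan_eq_sin_div_cos]
      field_simp
    have htb : Real.tan (c * ℓ) ≤ Real.tan ((1 - ε) * Real.pi / 2) := by
      rcases eq_or_lt_of_le hclpi with h | h
      · rw [h]
      · exact (Real.tan_lt_tan_of_lt_of_lt_pi_div_two (by linarith) hhalf h).le
    have htnn : 0 ≤ Real.tan (c * ℓ) :=
      Real.tan_nonneg_of_nonneg_of_le_pi_div_two hclnn hcl2.le
    have hsc : Real.sin c ≤ (1 - ε) * Real.pi / (2 * ℓ) :=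
      le_trans (Real.sin_le hc0.le) hcle
    have hsnn : 0 ≤ Real.sin c :=
      Real.sin_nonneg_of_nonneg_of_le_pi hc0.le (Real.arccos_le_pi _)
    have h1 : Real.cos c < 1 := by rw [hcos]; exact hexp1
    have h2 : Real.tan (c*ℓ) * Real.sin c
        ≤ Real.tan ((1-ε)*Real.pi/2) * ((1-ε)*Real.pi/(2*ℓ)) :=
      mul_le_mul htb hsc hsnn (htnn.trans htb)
    have h3 : Real.tan ((1-ε)*Real.pi/2) * ((1-ε)*Real.pi/(2*ℓ))
        = ((1-ε)*Real.pi/2) * Real.tan ((1-ε)*Real.pi/2) / ℓ := by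
      field_simp
    rw [hsplit]
    rw [h3] at h2
    linarith
  calc ∫ ω, Real.exp (lam *
        ((sInf {k : ℕ | (1 + ∑ i ∈ Finset.range k, Y i ω) ∉
          Set.Icc (1 : ℤ) (2 * ℓ - 1)} : ℕ) : ℝ)) ∂μ
      = ∫ ω, f ω ∂μ := rfl
    _ ≤ KK := hle
    _ < _ := hKlt
end

section
/- Consider a nearest-neighbor Markov chain on ℤ with transition probabilities P(x, x+1) = ω_x ∈ (0,1) and P(x, x−1) = 1−ω_x, started at 0, and let T_k be the hitting time of site k. Define modified environments ω⁻ and ω⁺ agreeing with ω off 0 and with ω⁻₀ = 0 (reflection left) and ω⁺₀ = 1 (reflection right). Then for every m ≥ 1 and n ≥ 1, P_ω(max_{k ≤ n} |X_k| < m) ≥ P_{ω⁻}(T_{−m} > n) · P_{ω⁺}(T_m > n). -/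
/-- Transition weight of a nearest-neighbor walk on `ℤ` in environment `ω`:
step from `a` to `a+1` with probability `ω a`, to `a-1` with probability `1 - ω a`. -/
noncomputable def stepW (ω : ℤ → ℝ) (a b : ℤ) : ℝ :=
  if b = a + 1 then ω a else if b = a - 1 then 1 - ω a else 0

/-- Quenched probability that a path of length `N` starting at `y` occurs. -/
noncomputable def pathWeight (ω : ℤ → ℝ) (y : ℤ) {N : ℕ} (x : Fin (N + 1) → ℤ) : ℝ :=
  if x 0 = y then ∏ k : Fin N, stepW ω (x k.castSucc) (x k.succ) else 0

/-- Quenched probability (for the walk started at `y` in environment `ω`) of an event `A`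
depending on the first `N` steps of the walk. -/
noncomputable def quenchedProb (ω : ℤ → ℝ) (y : ℤ) (N : ℕ)
    (A : Set (Fin (N + 1) → ℤ)) : ℝ :=
  ∑' x : A, pathWeight ω y (x : Fin (N + 1) → ℤ)

open Classical in
noncomputable def Gfun (ω : ℤ → ℝ) (P : ℤ → Prop) : ℕ → ℤ → ℝ
  | 0, y => if P y then 1 else 0
  | n+1, y => if P y then ω y * Gfun ω P n (y+1) + (1 - ω y) * Gfun ω P n (y-1) else 0

open Classical in
noncomputable def Ffun (ω : ℤ → ℝ) (P : ℤ → Prop) (N : ℕ) (y : ℤ) (x : Fin (N+1) → ℤ) : ℝ :=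
  if x 0 = y ∧ ∀ k, P (x k) then ∏ k : Fin N, stepW ω (x k.castSucc) (x k.succ) else 0

lemma pathWeight_support {ω : ℤ → ℝ} {y : ℤ} {N : ℕ} {x : Fin (N+1) → ℤ}
    (h : pathWeight ω y x ≠ 0) : ∀ k, x k ∈ Finset.Icc (y - N) (y + N) := by
  unfold pathWeight at h
  by_cases h0 : x 0 = y
  swap
  · simp [h0] at h
  rw [if_pos h0] at h
  have hstep : ∀ j : Fin N, x j.succ = x j.castSucc + 1 ∨ x j.succ = x j.castSucc - 1 := by
    intro j
    have := Finset.prod_ne_zero_iff.1 h j (Finset.mem_univ j)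
    unfold stepW at this
    split_ifs at this with h1 h2
    · exact Or.inl h1
    · exact Or.inr h2
    · exact absurd rfl this
  have key : ∀ j : ℕ, ∀ hj : j < N + 1, |x ⟨j, hj⟩ - y| ≤ (j : ℤ) := by
    intro j
    induction j with
    | zero => intro hj; simp [show (⟨0, hj⟩ : Fin (N+1)) = 0 from rfl, h0]
    | succ i ih =>
      intro hj
      have hi : i < N + 1 := Nat.lt_of_succ_lt hj
      have hiN : i < N := Nat.lt_of_succ_lt_succ hj
      have h1 := hstep ⟨i, hiN⟩
      have hc : (⟨i, hiN⟩ : Fin N).castSucc = ⟨i, hi⟩ := rfl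
      have hs : (⟨i, hiN⟩ : Fin N).succ = ⟨i+1, hj⟩ := rfl
      rw [hc, hs] at h1
      have := ih hi
      rw [abs_le] at this ⊢
      rcases h1 with h1 | h1 <;> rw [h1] <;> push_cast <;> omega
  intro k
  have := key k.val k.isLt
  have hk : (⟨k.val, k.isLt⟩ : Fin (N+1)) = k := rfl
  rw [hk] at this
  have hkN : (k.val : ℤ) ≤ (N : ℤ) := by exact_mod_cast Nat.le_of_lt_succ k.isLt
  simp only [Finset.mem_Icc]
  rw [abs_le] at this
  omega

lemma Ffun_support {ω : ℤ → ℝ} {P : ℤ → Prop} {N : ℕ} {y : ℤ} (x : Fin (N+1) → ℤ)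
    (hx : x ∉ Fintype.piFinset (fun _ : Fin (N+1) => Finset.Icc (y - N) (y + N))) :
    Ffun ω P N y x = 0 := by
  classical
  by_contra h
  apply hx
  rw [Fintype.mem_piFinset]
  intro k
  apply pathWeight_support (x := x) (ω := ω) (y := y) _ k
  unfold Ffun at h
  split_ifs at h with hc
  · unfold pathWeight; rw [if_pos hc.1]; exact h
  · simp at h

lemma Ffun_summable (ω : ℤ → ℝ) (P : ℤ → Prop) (N : ℕ) (y : ℤ) :
    Summable (Ffun ω P N y) :=
  summable_of_ne_finset_zero (fun x hx => Ffun_support x hx)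

lemma quenchedProb_eq_tsum (ω : ℤ → ℝ) (P : ℤ → Prop) (N : ℕ) (y : ℤ) :
    quenchedProb ω y N {x | ∀ k, P (x k)} = ∑' x, Ffun ω P N y x := by
  classical
  unfold quenchedProb
  rw [tsum_subtype]
  congr 1
  funext x
  by_cases hA : ∀ k, P (x k)
  · rw [Set.indicator_of_mem (show x ∈ {x : Fin (N+1) → ℤ | ∀ k, P (x k)} from hA)]
    unfold Ffun pathWeight
    by_cases h0 : x 0 = y
    · rw [if_pos h0, if_pos ⟨h0, hA⟩]
    · rw [if_neg h0, if_neg (fun h => h0 h.1)]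
  · rw [Set.indicator_of_notMem (show x ∉ {x : Fin (N+1) → ℤ | ∀ k, P (x k)} from hA)]
    unfold Ffun
    rw [if_neg (fun h => hA h.2)]

open Classical in
lemma tsum_Ffun_zero (ω : ℤ → ℝ) (P : ℤ → Prop) (y : ℤ) :
    ∑' x : Fin 1 → ℤ, Ffun ω P 0 y x = if P y then 1 else 0 := by
  classical
  rw [tsum_eq_single (fun _ => y)]
  · unfold Ffun
    simp
  · intro x hx
    unfold Ffun
    rw [if_neg]
    rintro ⟨h0, -⟩
    exact hx (funext fun k => by rw [Subsingleton.elim k 0]; exact h0)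

lemma prod_cons_step (ω : ℤ → ℝ) (N : ℕ) (z : ℤ) (t : Fin (N+1) → ℤ) :
    ∏ k : Fin (N+1), stepW ω ((Fin.cons z t : Fin (N+2) → ℤ) k.castSucc)
        ((Fin.cons z t : Fin (N+2) → ℤ) k.succ)
      = stepW ω z (t 0) * ∏ k : Fin N, stepW ω (t k.castSucc) (t k.succ) := by
  rw [Fin.prod_univ_succ]
  have h1 : ∀ k : Fin N,
      stepW ω ((Fin.cons z t : Fin (N+2) → ℤ) (k.succ).castSucc)
        ((Fin.cons z t : Fin (N+2) → ℤ) (k.succ).succ)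
      = stepW ω (t k.castSucc) (t k.succ) := by
    intro k
    congr 1
  rw [Finset.prod_congr rfl (fun k _ => h1 k)]
  simp

lemma if_step (ω : ℤ → ℝ) (z u : ℤ) (Q : ℝ) :
    ω z * (if u = z + 1 then Q else 0) + (1 - ω z) * (if u = z - 1 then Q else 0)
      = stepW ω z u * Q := by
  unfold stepW
  split_ifs
  · exfalso; omega
  · ring
  · ring
  · ring

open Classical in
lemma cons_Ffun (ω : ℤ → ℝ) (P : ℤ → Prop) (N : ℕ) (y z : ℤ) (t : Fin (N+1) → ℤ) :
    Ffun ω P (N+1) y (Fin.cons z t) =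
      if z = y then
        (if P y then ω y * Ffun ω P N (y+1) t + (1 - ω y) * Ffun ω P N (y-1) t else 0)
      else 0 := by
  classical
  unfold Ffun
  have hall : (∀ k : Fin (N+2), P ((Fin.cons z t : Fin (N+2) → ℤ) k)) ↔
      (P z ∧ ∀ k : Fin (N+1), P (t k)) := by
    rw [Fin.forall_fin_succ]
    simp
  have h0 : (Fin.cons z t : Fin (N+2) → ℤ) 0 = z := rfl
  rw [h0, prod_cons_step]
  by_cases hz : z = y
  · subst hz
    rw [if_pos rfl]
    by_cases hP : P z
    · by_cases hT : ∀ k : Fin (N+1), P (t k)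
      · rw [if_pos ⟨rfl, hall.2 ⟨hP, hT⟩⟩, if_pos hP]
        simp only [hT, implies_true, and_true]
        generalize (∏ k : Fin N, stepW ω (t k.castSucc) (t k.succ)) = Q
        rw [if_step]
      · have hL : ¬((z : ℤ) = z ∧ ∀ k : Fin (N+2), P ((Fin.cons z t : Fin (N+2) → ℤ) k)) :=
          fun h => hT (hall.1 h.2).2
        rw [if_neg hL]
        simp [hT]
    · have hL : ¬((z : ℤ) = z ∧ ∀ k : Fin (N+2), P ((Fin.cons z t : Fin (N+2) → ℤ) k)) :=
          fun h => hP (hall.1 h.2).1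
      rw [if_neg hL, if_neg hP]
  · rw [if_neg hz, if_neg (fun h => hz h.1)]

open Classical in
lemma tsum_Ffun_succ (ω : ℤ → ℝ) (P : ℤ → Prop) (N : ℕ) (y : ℤ) :
    ∑' x : Fin (N+2) → ℤ, Ffun ω P (N+1) y x =
      if P y then ω y * ∑' t : Fin (N+1) → ℤ, Ffun ω P N (y+1) t
        + (1 - ω y) * ∑' t : Fin (N+1) → ℤ, Ffun ω P N (y-1) t else 0 := by
  have hsum : Summable (fun p : ℤ × (Fin (N+1) → ℤ) => Ffun ω P (N+1) y (Fin.cons p.1 p.2)) := by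
    have h := (Fin.consEquiv (fun _ : Fin (N+2) => ℤ)).summable_iff.mpr (Ffun_summable ω P (N+1) y)
    exact h.congr (fun p => rfl)
  have hslice : ∀ z : ℤ, Summable (fun t : Fin (N+1) → ℤ => Ffun ω P (N+1) y (Fin.cons z t)) := by
    intro z
    apply Summable.congr ?_ (fun t => (cons_Ffun ω P N y z t).symm)
    by_cases hz : z = y
    · by_cases hP : P y
      · simp only [if_pos hz, if_pos hP]
        exact ((Ffun_summable ω P N (y+1)).mul_left _).add ((Ffun_summable ω P N (y-1)).mul_left _)
      · simp only [if_pos hz, if_neg hP]; exact summable_zero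
    · simp only [if_neg hz]; exact summable_zero
  have h1 : ∑' x : Fin (N+2) → ℤ, Ffun ω P (N+1) y x
      = ∑' p : ℤ × (Fin (N+1) → ℤ), Ffun ω P (N+1) y (Fin.cons p.1 p.2) := by
    rw [← Equiv.tsum_eq (Fin.consEquiv (fun _ : Fin (N+2) => ℤ)) (Ffun ω P (N+1) y)]
    exact tsum_congr (fun p => rfl)
  rw [h1, Summable.tsum_prod' hsum hslice]
  have hinner : ∀ z : ℤ, ∑' t : Fin (N+1) → ℤ, Ffun ω P (N+1) y (Fin.cons z t)
      = if z = y then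
          (if P y then ω y * ∑' t : Fin (N+1) → ℤ, Ffun ω P N (y+1) t
            + (1 - ω y) * ∑' t : Fin (N+1) → ℤ, Ffun ω P N (y-1) t else 0)
        else 0 := by
    intro z
    rw [tsum_congr (fun t => cons_Ffun ω P N y z t)]
    by_cases hz : z = y
    · by_cases hP : P y
      · simp only [if_pos hz, if_pos hP]
        rw [Summable.tsum_add ((Ffun_summable ω P N (y+1)).mul_left _)
          ((Ffun_summable ω P N (y-1)).mul_left _), tsum_mul_left, tsum_mul_left]
      · simp [if_pos hz, hP]
    · simp [if_neg hz]
  rw [tsum_congr hinner, tsum_eq_single y (fun z hz => if_neg hz), if_pos rfl]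

open Classical in
lemma tsum_Ffun_eq_Gfun (ω : ℤ → ℝ) (P : ℤ → Prop) :
    ∀ (N : ℕ) (y : ℤ), ∑' x : Fin (N+1) → ℤ, Ffun ω P N y x = Gfun ω P N y
  | 0, y => tsum_Ffun_zero ω P y
  | (N+1), y => by
    rw [tsum_Ffun_succ, tsum_Ffun_eq_Gfun ω P N (y+1), tsum_Ffun_eq_Gfun ω P N (y-1)]
    rfl

lemma quenchedProb_eq_Gfun (ω : ℤ → ℝ) (P : ℤ → Prop) (N : ℕ) (y : ℤ) :
    quenchedProb ω y N {x | ∀ k, P (x k)} = Gfun ω P N y := by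
  rw [quenchedProb_eq_tsum, tsum_Ffun_eq_Gfun]

open Classical in
lemma Gfun_succ (ω : ℤ → ℝ) (P : ℤ → Prop) (n : ℕ) (y : ℤ) :
    Gfun ω P (n+1) y
      = if P y then ω y * Gfun ω P n (y+1) + (1 - ω y) * Gfun ω P n (y-1) else 0 := rfl

open Classical in
lemma Gfun_zero (ω : ℤ → ℝ) (P : ℤ → Prop) (y : ℤ) :
    Gfun ω P 0 y = if P y then 1 else 0 := rfl

section Bounds

variable {ω : ℤ → ℝ}

lemma Gfun_nonneg (h0 : ∀ x, 0 ≤ ω x) (h1 : ∀ x, ω x ≤ 1) (P : ℤ → Prop) (n : ℕ) : ∀ y, 0 ≤ Gfun ω P n y := by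
  induction n with
  | zero => intro y; rw [Gfun_zero]; split_ifs <;> norm_num
  | succ n ih =>
    intro y
    rw [Gfun_succ]
    split_ifs with h
    · have a1 := ih (y+1); have a2 := ih (y-1); have := h0 y; have := h1 y; nlinarith
    · exact le_refl 0

lemma Gfun_le_one (h0 : ∀ x, 0 ≤ ω x) (h1 : ∀ x, ω x ≤ 1) (P : ℤ → Prop) (n : ℕ) : ∀ y, Gfun ω P n y ≤ 1 := by
  induction n with
  | zero => intro y; rw [Gfun_zero]; split_ifs <;> norm_num
  | succ n ih =>
    intro y
    rw [Gfun_succ]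
    split_ifs with h
    · have a1 := ih (y+1); have a2 := ih (y-1)
      have b1 := Gfun_nonneg h0 h1 P n (y+1); have b2 := Gfun_nonneg h0 h1 P n (y-1)
      have := h0 y; have := h1 y; nlinarith
    · norm_num

lemma Gfun_succ_le (h0 : ∀ x, 0 ≤ ω x) (h1 : ∀ x, ω x ≤ 1) (P : ℤ → Prop) (n : ℕ) : ∀ y, Gfun ω P (n+1) y ≤ Gfun ω P n y := by
  induction n with
  | zero =>
    intro y
    rw [Gfun_succ ω P 0 y, Gfun_zero ω P y]
    split_ifs with h
    · have a1 := Gfun_le_one h0 h1 P 0 (y+1); have a2 := Gfun_le_one h0 h1 P 0 (y-1)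
      have b1 := Gfun_nonneg h0 h1 P 0 (y+1); have b2 := Gfun_nonneg h0 h1 P 0 (y-1)
      have := h0 y; have := h1 y; nlinarith
    · exact le_refl 0
  | succ n ih =>
    intro y
    rw [Gfun_succ ω P (n+1) y, Gfun_succ ω P n y]
    split_ifs with h
    · have a1 := ih (y+1); have a2 := ih (y-1)
      have := h0 y; have := h1 y; nlinarith
    · exact le_refl 0

end Bounds

lemma update_bounds0 (ω : ℤ → ℝ) (h0 : ∀ x, 0 ≤ ω x) (h1 : ∀ x, ω x ≤ 1) (v : ℝ)
    (hv0 : 0 ≤ v) (hv1 : v ≤ 1) :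
    (∀ x, 0 ≤ Function.update ω 0 v x) ∧ (∀ x, Function.update ω 0 v x ≤ 1) := by
  constructor <;> intro x <;> rcases eq_or_ne x 0 with h | h
  · subst h; simpa using hv0
  · rw [Function.update_of_ne h]; exact h0 x
  · subst h; simpa using hv1
  · rw [Function.update_of_ne h]; exact h1 x

lemma main_ineq (ω : ℤ → ℝ) (hω : ∀ x, ω x ∈ Set.Ioo (0:ℝ) 1) (m : ℕ) (hm : 1 ≤ m) :
    ∀ n : ℕ,
      (∀ s : ℤ, 0 ≤ s → s ≤ (m:ℤ) →
        Gfun (Function.update ω 0 1) (fun y => y ≠ (m:ℤ)) n s *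
          Gfun (Function.update ω 0 0) (fun y => y ≠ -(m:ℤ)) n 0
          ≤ Gfun ω (fun y => |y| < (m:ℤ)) n s) ∧
      (∀ s : ℤ, -(m:ℤ) ≤ s → s ≤ 0 →
        Gfun (Function.update ω 0 0) (fun y => y ≠ -(m:ℤ)) n s *
          Gfun (Function.update ω 0 1) (fun y => y ≠ (m:ℤ)) n 0
          ≤ Gfun ω (fun y => |y| < (m:ℤ)) n s) := by
  have h0 : ∀ x, 0 ≤ ω x := fun x => (hω x).1.le
  have h1 : ∀ x, ω x ≤ 1 := fun x => (hω x).2.le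
  obtain ⟨hp0, hp1⟩ := update_bounds0 ω h0 h1 1 (by norm_num) (by norm_num)
  obtain ⟨hq0, hq1⟩ := update_bounds0 ω h0 h1 0 (by norm_num) (by norm_num)
  set ωp := Function.update ω 0 1 with hωp
  set ωq := Function.update ω 0 0 with hωq
  set Pp : ℤ → Prop := fun y => y ≠ (m:ℤ) with hPp
  set Pq : ℤ → Prop := fun y => y ≠ -(m:ℤ) with hPq
  set Pg : ℤ → Prop := fun y => |y| < (m:ℤ) with hPg
  intro n
  induction n with
  | zero =>
    constructor
    · intro s hs0 hsm
      rcases eq_or_ne s (m:ℤ) with h | h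
      · rw [Gfun_zero ωp Pp s, if_neg (not_not_intro h), zero_mul]
        rw [Gfun_zero ω Pg s]
        split_ifs <;> norm_num
      · have habs : |s| < (m:ℤ) := abs_lt.mpr ⟨by omega, by omega⟩
        rw [Gfun_zero ω Pg s, if_pos habs, Gfun_zero, Gfun_zero]
        split_ifs <;> norm_num
    · intro s hs0 hsm
      rcases eq_or_ne s (-(m:ℤ)) with h | h
      · rw [Gfun_zero ωq Pq s, if_neg (not_not_intro h), zero_mul]
        rw [Gfun_zero ω Pg s]
        split_ifs <;> norm_num
      · have habs : |s| < (m:ℤ) := abs_lt.mpr ⟨by omega, by omega⟩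
        rw [Gfun_zero ω Pg s, if_pos habs, Gfun_zero, Gfun_zero]
        split_ifs <;> norm_num
  | succ n ih =>
    obtain ⟨ih1, ih2⟩ := ih
    have hA1 : Gfun ωq Pq (n+1) 0 = Gfun ωq Pq n (-1) := by
      rw [Gfun_succ ωq Pq n 0, if_pos (show Pq 0 from by rw [hPq]; simp; omega)]
      rw [hωq, Function.update_self]
      norm_num
    have hB1 : Gfun ωp Pp (n+1) 0 = Gfun ωp Pp n 1 := by
      rw [Gfun_succ ωp Pp n 0, if_pos (show Pp 0 from by rw [hPp]; simp; omega)]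
      rw [hωp, Function.update_self]
      norm_num
    have MA : Gfun ωq Pq n (-1) ≤ Gfun ωq Pq n 0 := hA1 ▸ Gfun_succ_le hq0 hq1 Pq n 0
    have MB : Gfun ωp Pp n 1 ≤ Gfun ωp Pp n 0 := hB1 ▸ Gfun_succ_le hp0 hp1 Pp n 0
    have part1 : ∀ s : ℤ, 0 ≤ s → s ≤ (m:ℤ) →
        Gfun ωp Pp (n+1) s * Gfun ωq Pq (n+1) 0 ≤ Gfun ω Pg (n+1) s := by
      intro s hs0 hsm
      rcases eq_or_ne s (m:ℤ) with hseq | hsne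
      · rw [Gfun_succ ωp Pp n s, if_neg (show ¬ Pp s from by rw [hPp]; simp [hseq]), zero_mul]
        exact Gfun_nonneg h0 h1 Pg (n+1) s
      have habs : |s| < (m:ℤ) := abs_lt.mpr ⟨by omega, by omega⟩
      rcases eq_or_ne s 0 with hszero | hsnz
      · subst hszero
        rw [hA1, hB1]
        rw [Gfun_succ ω Pg n 0, if_pos (show Pg 0 from habs)]
        simp only [zero_add, zero_sub]
        have I1 : Gfun ωp Pp n 1 * Gfun ωq Pq n 0 ≤ Gfun ω Pg n 1 :=
          ih1 1 (by norm_num) (by omega)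
        have I2 : Gfun ωq Pq n (-1) * Gfun ωp Pp n 0 ≤ Gfun ω Pg n (-1) :=
          ih2 (-1) (by omega) (by norm_num)
        have nA : 0 ≤ Gfun ωq Pq n (-1) := Gfun_nonneg hq0 hq1 Pq n (-1)
        have nB : 0 ≤ Gfun ωp Pp n 1 := Gfun_nonneg hp0 hp1 Pp n 1
        have c1 : Gfun ωp Pp n 1 * Gfun ωq Pq n (-1) ≤ Gfun ωp Pp n 1 * Gfun ωq Pq n 0 :=
          mul_le_mul_of_nonneg_left MA nB
        have c2 : Gfun ωq Pq n (-1) * Gfun ωp Pp n 1 ≤ Gfun ωq Pq n (-1) * Gfun ωp Pp n 0 :=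
          mul_le_mul_of_nonneg_left MB nA
        calc Gfun ωp Pp n 1 * Gfun ωq Pq n (-1)
            = ω 0 * (Gfun ωp Pp n 1 * Gfun ωq Pq n (-1))
              + (1 - ω 0) * (Gfun ωq Pq n (-1) * Gfun ωp Pp n 1) := by ring
          _ ≤ ω 0 * (Gfun ωp Pp n 1 * Gfun ωq Pq n 0)
              + (1 - ω 0) * (Gfun ωq Pq n (-1) * Gfun ωp Pp n 0) :=
              add_le_add (mul_le_mul_of_nonneg_left c1 (h0 0))
                (mul_le_mul_of_nonneg_left c2 (by linarith [h1 0]))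
          _ ≤ ω 0 * Gfun ω Pg n 1 + (1 - ω 0) * Gfun ω Pg n (-1) :=
              add_le_add (mul_le_mul_of_nonneg_left I1 (h0 0))
                (mul_le_mul_of_nonneg_left I2 (by linarith [h1 0]))
      · rw [Gfun_succ ωp Pp n s, if_pos (show Pp s from hsne)]
        rw [hωp, Function.update_of_ne hsnz]
        rw [Gfun_succ ω Pg n s, if_pos (show Pg s from habs)]
        have I1 : Gfun ωp Pp n (s+1) * Gfun ωq Pq n 0 ≤ Gfun ω Pg n (s+1) :=
          ih1 (s+1) (by omega) (by omega)
        have I2 : Gfun ωp Pp n (s-1) * Gfun ωq Pq n 0 ≤ Gfun ω Pg n (s-1) :=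
          ih1 (s-1) (by omega) (by omega)
        have MA' : Gfun ωq Pq (n+1) 0 ≤ Gfun ωq Pq n 0 := Gfun_succ_le hq0 hq1 Pq n 0
        have nB1 : 0 ≤ Gfun ωp Pp n (s+1) := Gfun_nonneg hp0 hp1 Pp n (s+1)
        have nB2 : 0 ≤ Gfun ωp Pp n (s-1) := Gfun_nonneg hp0 hp1 Pp n (s-1)
        calc (ω s * Gfun ωp Pp n (s+1) + (1 - ω s) * Gfun ωp Pp n (s-1)) * Gfun ωq Pq (n+1) 0
            = ω s * (Gfun ωp Pp n (s+1) * Gfun ωq Pq (n+1) 0)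
              + (1 - ω s) * (Gfun ωp Pp n (s-1) * Gfun ωq Pq (n+1) 0) := by ring
          _ ≤ ω s * (Gfun ωp Pp n (s+1) * Gfun ωq Pq n 0)
              + (1 - ω s) * (Gfun ωp Pp n (s-1) * Gfun ωq Pq n 0) :=
              add_le_add
                (mul_le_mul_of_nonneg_left (mul_le_mul_of_nonneg_left MA' nB1) (h0 s))
                (mul_le_mul_of_nonneg_left (mul_le_mul_of_nonneg_left MA' nB2) (by linarith [h1 s]))
          _ ≤ ω s * Gfun ω Pg n (s+1) + (1 - ω s) * Gfun ω Pg n (s-1) :=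
              add_le_add (mul_le_mul_of_nonneg_left I1 (h0 s))
                (mul_le_mul_of_nonneg_left I2 (by linarith [h1 s]))
    refine ⟨part1, ?_⟩
    intro s hsm hs0
    rcases eq_or_ne s (-(m:ℤ)) with hseq | hsne
    · rw [Gfun_succ ωq Pq n s, if_neg (show ¬ Pq s from by rw [hPq]; simp [hseq]), zero_mul]
      exact Gfun_nonneg h0 h1 Pg (n+1) s
    have habs : |s| < (m:ℤ) := abs_lt.mpr ⟨by omega, by omega⟩
    rcases eq_or_ne s 0 with hszero | hsnz
    · subst hszero
      rw [mul_comm]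
      exact part1 0 le_rfl (by omega)
    · rw [Gfun_succ ωq Pq n s, if_pos (show Pq s from hsne)]
      rw [hωq, Function.update_of_ne hsnz]
      rw [Gfun_succ ω Pg n s, if_pos (show Pg s from habs)]
      have I1 : Gfun ωq Pq n (s+1) * Gfun ωp Pp n 0 ≤ Gfun ω Pg n (s+1) :=
        ih2 (s+1) (by omega) (by omega)
      have I2 : Gfun ωq Pq n (s-1) * Gfun ωp Pp n 0 ≤ Gfun ω Pg n (s-1) :=
        ih2 (s-1) (by omega) (by omega)
      have MB' : Gfun ωp Pp (n+1) 0 ≤ Gfun ωp Pp n 0 := Gfun_succ_le hp0 hp1 Pp n 0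
      have nA1 : 0 ≤ Gfun ωq Pq n (s+1) := Gfun_nonneg hq0 hq1 Pq n (s+1)
      have nA2 : 0 ≤ Gfun ωq Pq n (s-1) := Gfun_nonneg hq0 hq1 Pq n (s-1)
      calc (ω s * Gfun ωq Pq n (s+1) + (1 - ω s) * Gfun ωq Pq n (s-1)) * Gfun ωp Pp (n+1) 0
          = ω s * (Gfun ωq Pq n (s+1) * Gfun ωp Pp (n+1) 0)
            + (1 - ω s) * (Gfun ωq Pq n (s-1) * Gfun ωp Pp (n+1) 0) := by ring
        _ ≤ ω s * (Gfun ωq Pq n (s+1) * Gfun ωp Pp n 0)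
            + (1 - ω s) * (Gfun ωq Pq n (s-1) * Gfun ωp Pp n 0) :=
            add_le_add
              (mul_le_mul_of_nonneg_left (mul_le_mul_of_nonneg_left MB' nA1) (h0 s))
              (mul_le_mul_of_nonneg_left (mul_le_mul_of_nonneg_left MB' nA2) (by linarith [h1 s]))
        _ ≤ ω s * Gfun ω Pg n (s+1) + (1 - ω s) * Gfun ω Pg n (s-1) :=
            add_le_add (mul_le_mul_of_nonneg_left I1 (h0 s))
              (mul_le_mul_of_nonneg_left I2 (by linarith [h1 s]))

/-- For a nearest-neighbor walk in environment `ω` started at `0`, with `ω⁻` and `ω⁺`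
the environments reflected leftward/rightward at `0` (`ω⁻₀ = 0`, `ω⁺₀ = 1`), the probability
of staying in `(-m, m)` for `n` steps is at least
`P_{ω⁻}(T_{-m} > n) · P_{ω⁺}(T_m > n)`. -/
theorem stmt15 (ω : ℤ → ℝ) (hω : ∀ x, ω x ∈ Set.Ioo (0:ℝ) 1) (m n : ℕ)
    (hm : 1 ≤ m) (hn : 1 ≤ n) :
    quenchedProb ω 0 n {x | ∀ k, |x k| < (m : ℤ)} ≥
      quenchedProb (Function.update ω 0 0) 0 n {x | ∀ k, x k ≠ -(m : ℤ)} *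
        quenchedProb (Function.update ω 0 1) 0 n {x | ∀ k, x k ≠ (m : ℤ)} := by
  rw [ge_iff_le,
    quenchedProb_eq_Gfun ω (fun y => |y| < (m:ℤ)) n 0,
    quenchedProb_eq_Gfun (Function.update ω 0 0) (fun y => y ≠ -(m:ℤ)) n 0,
    quenchedProb_eq_Gfun (Function.update ω 0 1) (fun y => y ≠ (m:ℤ)) n 0,
    mul_comm]
  exact (main_ineq ω hω m hm n).1 0 le_rfl (by omega)
end
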